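/- arXiv:1504.02965 — 5 statements merged into one kernel-verified Lean document; each statement's English description precedes it below -/
import Mathlib

section
/- Let Φ and Ψ be stationary random measures on a common probability space (Ω,𝓕,P) with ergodic P, with positive finite intensities satisfying λ_Φ = λ_Ψ. Let F be a flow-adapted jointly measurable map such that P-almost surely F(ω,·,·) is a stable constrained density for (Φ(ω), Ψ(ω)). Then P-almost surely F(ω,·,·) is balancing for (Φ(ω), Ψ(ω)): the set of F(ω)-unexhausted sites has Φ(ω)-measure zero and the set of F(ω)-unsated centers has Ψ(ω)-measure zero. -/
open MeasureTheory Filter Metric Bornology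
open scoped ENNReal NNReal Topology

noncomputable section

attribute [local instance] Classical.propDecidable

/-- Euclidean space `ℝ^d`. -/
abbrev Rd (d : ℕ) : Type := EuclideanSpace ℝ (Fin d)

/-- Locally finite: finite on bounded sets. -/
def LocFin {d : ℕ} (μ : Measure (Rd d)) : Prop :=
  ∀ s : Set (Rd d), IsBounded s → μ s < ⊤

/-- A sub-balancing density for `(φ, ψ)`. -/
def IsSubBalancing {d : ℕ} (φ ψ : Measure (Rd d)) (f : Rd d → Rd d → ℝ) : Prop :=
  Measurable (Function.uncurry f) ∧ (∀ x ξ, 0 ≤ f x ξ) ∧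
  (∀ x, ∫⁻ ξ, ENNReal.ofReal (f x ξ) ∂ψ ≤ 1) ∧
  (∀ ξ, ∫⁻ x, ENNReal.ofReal (f x ξ) ∂φ ≤ 1)

/-- A balancing density for `(φ, ψ)`. -/
def IsBalancing {d : ℕ} (φ ψ : Measure (Rd d)) (f : Rd d → Rd d → ℝ) : Prop :=
  IsSubBalancing φ ψ f ∧
  (∀ᵐ x ∂φ, ∫⁻ ξ, ENNReal.ofReal (f x ξ) ∂ψ = 1) ∧
  (∀ᵐ ξ ∂ψ, ∫⁻ x, ENNReal.ofReal (f x ξ) ∂φ = 1)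

/-- A constrained density for `(φ, ψ)`. -/
def IsConstrainedDensity {d : ℕ} (φ ψ : Measure (Rd d)) (f : Rd d → Rd d → ℝ) : Prop :=
  IsSubBalancing φ ψ f ∧ ∀ x ξ, f x ξ ≤ 1

/-- The site `x` is `f`-unexhausted. -/
def Unexhausted {d : ℕ} (ψ : Measure (Rd d)) (f : Rd d → Rd d → ℝ) (x : Rd d) : Prop :=
  ∫⁻ ξ, ENNReal.ofReal (f x ξ) ∂ψ < 1

/-- The center `ξ` is `f`-unsated. -/
def Unsated {d : ℕ} (φ : Measure (Rd d)) (f : Rd d → Rd d → ℝ) (ξ : Rd d) : Prop :=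
  ∫⁻ x, ENNReal.ofReal (f x ξ) ∂φ < 1

/-- The site `x₀` `f`-desires the center `ξ₀`. -/
def SiteDesires {d : ℕ} (ψ : Measure (Rd d)) (f : Rd d → Rd d → ℝ) (x₀ ξ₀ : Rd d) : Prop :=
  f x₀ ξ₀ < 1 ∧ (Unexhausted ψ f x₀ ∨ ∃ ξ₁, dist x₀ ξ₀ < dist x₀ ξ₁ ∧ 0 < f x₀ ξ₁)

/-- The center `ξ₀` `f`-desires the site `x₀`. -/
def CenterDesires {d : ℕ} (φ : Measure (Rd d)) (f : Rd d → Rd d → ℝ) (x₀ ξ₀ : Rd d) : Prop :=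
  f x₀ ξ₀ < 1 ∧ (Unsated φ f ξ₀ ∨ ∃ x₁, dist x₀ ξ₀ < dist x₁ ξ₀ ∧ 0 < f x₁ ξ₀)

/-- A stable constrained density for `(φ, ψ)`. -/
def IsStableDensity {d : ℕ} (φ ψ : Measure (Rd d)) (f : Rd d → Rd d → ℝ) : Prop :=
  IsConstrainedDensity φ ψ f ∧
  ¬∃ x₀ ξ₀, SiteDesires ψ f x₀ ξ₀ ∧ CenterDesires φ f x₀ ξ₀

/-- Application radius given previous rejection function `Rp`. -/
def appRad {d : ℕ} (ψ : Measure (Rd d)) (Rp : Rd d → Rd d → ℝ) (x : Rd d) : ℝ≥0∞ :=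
  sSup (ENNReal.ofReal '' {a : ℝ | 0 ≤ a ∧
    ∫⁻ ξ in closedBall x a, ENNReal.ofReal (1 - Rp x ξ) ∂ψ ≤ 1})

/-- The boundary weight `c` in the application step. -/
def appC {d : ℕ} (ψ : Measure (Rd d)) (Rp : Rd d → Rd d → ℝ) (x : Rd d) : ℝ :=
  if appRad ψ Rp x ≠ ⊤ ∧
      0 < ∫⁻ ξ in sphere x (appRad ψ Rp x).toReal, ENNReal.ofReal (1 - Rp x ξ) ∂ψ then
    1 - (1 - (∫⁻ ξ in ball x (appRad ψ Rp x).toReal, ENNReal.ofReal (1 - Rp x ξ) ∂ψ).toReal) /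
      (∫⁻ ξ in sphere x (appRad ψ Rp x).toReal, ENNReal.ofReal (1 - Rp x ξ) ∂ψ).toReal
  else 1

/-- The application function built from the previous rejection function `Rp`. -/
def appFun {d : ℕ} (ψ : Measure (Rd d)) (Rp : Rd d → Rd d → ℝ) (x ξ : Rd d) : ℝ :=
  if ENNReal.ofReal (dist x ξ) < appRad ψ Rp x then 1
  else if ENNReal.ofReal (dist x ξ) = appRad ψ Rp x then
    appC ψ Rp x * Rp x ξ + (1 - appC ψ Rp x)
  else 0

/-- Rejection radius given the current application function `A`. -/
def rejRad {d : ℕ} (φ : Measure (Rd d)) (A : Rd d → Rd d → ℝ) (ξ : Rd d) : ℝ≥0∞ :=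
  sSup (ENNReal.ofReal '' {r : ℝ | 0 ≤ r ∧
    ∫⁻ x in closedBall ξ r, ENNReal.ofReal (A x ξ) ∂φ ≤ 1})

/-- The boundary weight `c′` in the rejection step. -/
def rejC {d : ℕ} (φ : Measure (Rd d)) (A : Rd d → Rd d → ℝ) (ξ : Rd d) : ℝ :=
  if rejRad φ A ξ ≠ ⊤ ∧
      0 < ∫⁻ x in sphere ξ (rejRad φ A ξ).toReal, ENNReal.ofReal (A x ξ) ∂φ then
    1 - (1 - (∫⁻ x in ball ξ (rejRad φ A ξ).toReal, ENNReal.ofReal (A x ξ) ∂φ).toReal) /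
      (∫⁻ x in sphere ξ (rejRad φ A ξ).toReal, ENNReal.ofReal (A x ξ) ∂φ).toReal
  else 0

/-- The rejection function built from the current application function `A`. -/
def rejFun {d : ℕ} (φ : Measure (Rd d)) (A : Rd d → Rd d → ℝ) (x ξ : Rd d) : ℝ :=
  if ENNReal.ofReal (dist x ξ) < rejRad φ A ξ then 0
  else if ENNReal.ofReal (dist x ξ) = rejRad φ A ξ then rejC φ A ξ * A x ξ
  else A x ξ

/-- `GS_R φ ψ n` is the rejection function `Rₙ` of the site-optimal Gale–Shapley
algorithm (so `GS_R φ ψ 0 = R₀ = 0`). -/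
def GS_R {d : ℕ} (φ ψ : Measure (Rd d)) : ℕ → Rd d → Rd d → ℝ
  | 0 => fun _ _ => 0
  | n + 1 => rejFun φ (appFun ψ (GS_R φ ψ n))

/-- `GS_A φ ψ n` is the application function `Aₙ₊₁` (the one built from `Rₙ`). -/
def GS_A {d : ℕ} (φ ψ : Measure (Rd d)) (n : ℕ) : Rd d → Rd d → ℝ :=
  appFun ψ (GS_R φ ψ n)

/-- `GS_a φ ψ n` is the application radius `aₙ₊₁`. -/
def GS_a {d : ℕ} (φ ψ : Measure (Rd d)) (n : ℕ) : Rd d → ℝ≥0∞ :=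
  appRad ψ (GS_R φ ψ n)

/-- `GS_r φ ψ n` is the rejection radius `rₙ₊₁`. -/
def GS_r {d : ℕ} (φ ψ : Measure (Rd d)) (n : ℕ) : Rd d → ℝ≥0∞ :=
  rejRad φ (GS_A φ ψ n)

/-- The limiting application function `A = limₙ Aₙ` (a monotone limit, hence a `⨆`). -/
def GS_Alim {d : ℕ} (φ ψ : Measure (Rd d)) (x ξ : Rd d) : ℝ := ⨆ n, GS_A φ ψ n x ξ

/-- The limiting rejection function `R = limₙ Rₙ` (a monotone limit, hence a `⨆`). -/
def GS_Rlim {d : ℕ} (φ ψ : Measure (Rd d)) (x ξ : Rd d) : ℝ := ⨆ n, GS_R φ ψ n x ξ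

/-- The site-optimal density `f_s = A − R` for `(φ, ψ)`. -/
def siteOptimal {d : ℕ} (φ ψ : Measure (Rd d)) (x ξ : Rd d) : ℝ :=
  GS_Alim φ ψ x ξ - GS_Rlim φ ψ x ξ

/-- The center-optimal density for `(φ, ψ)`. -/
def centerOptimal {d : ℕ} (φ ψ : Measure (Rd d)) (x ξ : Rd d) : ℝ :=
  siteOptimal ψ φ ξ x

/-- Assumption U. -/
def AssumptionU {d : ℕ} (φ ψ : Measure (Rd d)) : Prop :=
  (∀ᵐ x ∂φ, ∀ r : ℝ, 0 < r → ∃ s ∈ sphere x r, ψ (sphere x r \ {s}) = 0) ∧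
  (∀ᵐ ξ ∂ψ, ∀ r : ℝ, 0 < r → ∃ s ∈ sphere ξ r, φ (sphere ξ r \ {s}) = 0)

/-- A measurable flow on `Ω`. -/
def IsMeasurableFlow {Ω : Type*} [MeasurableSpace Ω] {d : ℕ} (θ : Rd d → Ω → Ω) : Prop :=
  Measurable (fun p : Rd d × Ω => θ p.1 p.2) ∧ θ 0 = id ∧
  ∀ s t : Rd d, θ s ∘ θ t = θ (s + t)

/-- `P` is invariant under the flow `θ`. -/
def IsFlowInvariant {Ω : Type*} [MeasurableSpace Ω] {d : ℕ} (θ : Rd d → Ω → Ω)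
    (P : Measure Ω) : Prop :=
  ∀ s, Measure.map (θ s) P = P

/-- `P` is ergodic for the flow `θ`. -/
def IsErgodicFlow {Ω : Type*} [MeasurableSpace Ω] {d : ℕ} (θ : Rd d → Ω → Ω)
    (P : Measure Ω) : Prop :=
  ∀ A : Set Ω, MeasurableSet A → (∀ s, θ s ⁻¹' A = A) → P A = 0 ∨ P A = 1

/-- A random measure: measurable and everywhere locally finite. -/
def IsRandomMeasure {Ω : Type*} [MeasurableSpace Ω] {d : ℕ} (Φ : Ω → Measure (Rd d)) : Prop :=
  (∀ B : Set (Rd d), MeasurableSet B → Measurable fun ω => Φ ω B) ∧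
  (∀ ω, LocFin (Φ ω))

/-- The random measure `Φ` is flow-adapted. -/
def FlowAdaptedMeasure {Ω : Type*} [MeasurableSpace Ω] {d : ℕ} (θ : Rd d → Ω → Ω)
    (Φ : Ω → Measure (Rd d)) : Prop :=
  ∀ ω s (B : Set (Rd d)), MeasurableSet B → Φ (θ s ω) B = Φ ω ((fun b => b + s) '' B)

/-- `Φ` has intensity `lam`. -/
def HasIntensity {Ω : Type*} [MeasurableSpace Ω] {d : ℕ} (P : Measure Ω)
    (Φ : Ω → Measure (Rd d)) (lam : ℝ≥0∞) : Prop :=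
  ∀ B : Set (Rd d), MeasurableSet B → ∫⁻ ω, Φ ω B ∂P = lam * volume B

/-- A flow-adapted jointly measurable function `F : Ω × ℝ^d × ℝ^d → ℝ`. -/
def FlowAdaptedKernel {Ω : Type*} [MeasurableSpace Ω] {d : ℕ} (θ : Rd d → Ω → Ω)
    (F : Ω → Rd d → Rd d → ℝ) : Prop :=
  Measurable (fun p : Ω × Rd d × Rd d => F p.1 p.2.1 p.2.2) ∧
  ∀ ω s x ξ, F (θ s ω) x ξ = F ω (x + s) (ξ + s)

/-- The shift `θ_t μ` of a measure: `(θ_t μ)(B) = μ(B + t)`. -/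
def shiftMeasure {d : ℕ} (t : Rd d) (μ : Measure (Rd d)) : Measure (Rd d) :=
  Measure.map (fun x => x - t) μ

/-- `s(x)` of the Voronoi transport kernel. -/
def vRad {d : ℕ} (ψ : Measure (Rd d)) (x : Rd d) : ℝ≥0∞ :=
  sSup (ENNReal.ofReal '' {s : ℝ | 0 ≤ s ∧ ψ (closedBall x s) ≤ 1})

/-- The boundary weight `c(x)` of the Voronoi density. -/
def vC {d : ℕ} (ψ : Measure (Rd d)) (x : Rd d) : ℝ :=
  if vRad ψ x ≠ ⊤ ∧ 0 < ψ (sphere x (vRad ψ x).toReal) then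
    (1 - (ψ (ball x (vRad ψ x).toReal)).toReal) / (ψ (sphere x (vRad ψ x).toReal)).toReal
  else 1

/-- The Voronoi density with respect to `ψ`. -/
def voronoiDensity {d : ℕ} (ψ : Measure (Rd d)) (x ξ : Rd d) : ℝ :=
  if ENNReal.ofReal (dist x ξ) < vRad ψ x then 1
  else if ENNReal.ofReal (dist x ξ) = vRad ψ x then vC ψ x
  else 0

/-- The Voronoi territory of `ξ` with respect to `ψ`. -/
def voronoiTerritory {d : ℕ} (ψ : Measure (Rd d)) (ξ : Rd d) : Set (Rd d) :=
  {x | 0 < voronoiDensity ψ x ξ}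

/-- The (topological) support of a measure. -/
def msupport {d : ℕ} (ψ : Measure (Rd d)) : Set (Rd d) := {x | ∀ U ∈ 𝓝 x, 0 < ψ U}


section S4aux
open MeasureTheory Filter Metric Bornology ProbabilityTheory Function
open scoped ENNReal NNReal Topology

namespace S4

variable {Ω : Type*} [MeasurableSpace Ω] {d : ℕ}

/-- the band of points with norm in `[n, n+1)` -/
def band (d n : ℕ) : Set (Rd d) := {x | ‖x‖ ∈ Set.Ico (n : ℝ) (n + 1)}

lemma measurable_band (d n : ℕ) : MeasurableSet (band d n) :=
  measurable_norm measurableSet_Ico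

lemma band_subset (d n : ℕ) : band d n ⊆ closedBall (0 : Rd d) (n + 1) := by
  intro x hx
  simpa [mem_closedBall, dist_zero_right] using hx.2.le

lemma iUnion_band (d : ℕ) : (⋃ n, band d n) = Set.univ := by
  ext x
  simp only [Set.mem_iUnion, Set.mem_univ, iff_true]
  exact ⟨⌊‖x‖⌋₊, Nat.floor_le (norm_nonneg x), Nat.lt_floor_add_one _⟩

lemma pairwise_band (d : ℕ) : Pairwise (Function.onFun Disjoint (band d)) := by
  intro n m h
  rcases h.lt_or_gt with h' | h'
  · refine Set.disjoint_left.2 fun x hx hx2 => absurd (hx.2.trans_le (le_trans ?_ hx2.1)) (lt_irrefl _)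
    exact_mod_cast Nat.succ_le_of_lt h'
  · refine Set.disjoint_left.2 fun x hx hx2 => absurd (hx2.2.trans_le (le_trans ?_ hx.1)) (lt_irrefl _)
    exact_mod_cast Nat.succ_le_of_lt h'

/-- The kernel associated to a random measure. -/
def kern (Φ : Ω → Measure (Rd d)) (hΦ : IsRandomMeasure Φ) : Kernel Ω (Rd d) where
  toFun := Φ
  measurable' := Measure.measurable_of_measurable_coe _ (fun s hs => hΦ.1 s hs)

@[simp] lemma kern_apply (Φ : Ω → Measure (Rd d)) (hΦ : IsRandomMeasure Φ) (ω : Ω) :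
    kern Φ hΦ ω = Φ ω := rfl

theorem sigmaFinite_of_locFin {μ : Measure (Rd d)} (h : LocFin μ) : SigmaFinite μ := by
  refine ⟨⟨⟨fun n => closedBall 0 n, fun _ => trivial, fun n => h _ isBounded_closedBall, ?_⟩⟩⟩
  apply Set.iUnion_eq_univ_iff.2
  intro x
  exact ⟨⌈‖x‖⌉₊, by simpa [mem_closedBall, dist_zero_right] using Nat.le_ceil ‖x‖⟩

theorem kern_sfinite (Φ : Ω → Measure (Rd d)) (hΦ : IsRandomMeasure Φ) :
    IsSFiniteKernel (kern Φ hΦ) := by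
  classical
  -- the event that the n-th band has measure in [m, m+1)
  set s : ℕ → ℕ → Set Ω := fun n m => {ω | Φ ω (band d n) ∈ Set.Ico (m : ℝ≥0∞) (m + 1)} with hs
  have hsm : ∀ n m, MeasurableSet (s n m) := fun n m =>
    (hΦ.1 _ (measurable_band d n)) measurableSet_Ico
  set κs : ℕ × ℕ → Kernel Ω (Rd d) := fun p =>
    Kernel.piecewise (hsm p.1 p.2) ((kern Φ hΦ).restrict (measurable_band d p.1)) 0 with hκs
  have hfin : ∀ p, IsFiniteKernel (κs p) := by
    rintro ⟨n, m⟩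
    refine ⟨⟨(m : ℝ≥0∞) + 1, ENNReal.add_lt_top.2 ⟨ENNReal.natCast_lt_top m, ENNReal.one_lt_top⟩, fun ω => ?_⟩⟩
    by_cases hω : ω ∈ s n m
    · simp only [hκs, Kernel.piecewise_apply, if_pos hω, Kernel.restrict_apply, kern_apply]
      rw [Measure.restrict_apply_univ]
      exact hω.2.le
    · simp [hκs, Kernel.piecewise_apply, if_neg hω]
  have hsum : kern Φ hΦ = Kernel.sum κs := by
    ext ω t ht
    rw [Kernel.sum_apply' _ _ ht, ENNReal.tsum_prod']
    have hband : ∀ n, (∑' m : ℕ, κs (n, m) ω t) = Φ ω (t ∩ band d n) := by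
      intro n
      have hmem : Φ ω (band d n) < ⊤ :=
        hΦ.2 ω _ (isBounded_closedBall.subset (band_subset d n))
      obtain ⟨m₀, hm₀⟩ : ∃ m₀ : ℕ, Φ ω (band d n) ∈ Set.Ico (m₀ : ℝ≥0∞) (m₀ + 1) := by
        lift Φ ω (band d n) to ℝ≥0 using hmem.ne with v hv
        refine ⟨⌊(v:ℝ)⌋₊, ?_, ?_⟩
        · exact_mod_cast (by exact_mod_cast Nat.floor_le v.coe_nonneg : ((⌊(v:ℝ)⌋₊ : ℝ≥0)) ≤ v)
        · have : (v : ℝ) < ⌊(v:ℝ)⌋₊ + 1 := Nat.lt_floor_add_one _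
          exact_mod_cast (by exact_mod_cast this : v < ((⌊(v:ℝ)⌋₊ : ℝ≥0) + 1))
      have hval : ∀ m, κs (n, m) ω t = if m = m₀ then Φ ω (t ∩ band d n) else 0 := by
        intro m
        by_cases hm : m = m₀
        · subst hm
          simp only [hκs, Kernel.piecewise_apply, if_pos (show ω ∈ s n m from hm₀), if_pos rfl,
            Kernel.restrict_apply, kern_apply, if_true]
          rw [Measure.restrict_apply ht]
        · have : ω ∉ s n m := by
            intro hω
            rcases lt_or_gt_of_ne (fun h : m = m₀ => hm h) with h | h
            · exact absurd (hω.2.trans_le (le_trans (by exact_mod_cast Nat.succ_le_of_lt h) hm₀.1)) (lt_irrefl _)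
            · exact absurd (hm₀.2.trans_le (le_trans (by exact_mod_cast Nat.succ_le_of_lt h) hω.1)) (lt_irrefl _)
          simp [hκs, Kernel.piecewise_apply, if_neg this, hm]
      simp_rw [hval]
      exact tsum_ite_eq m₀ _
    simp_rw [hband]
    have : t = ⋃ n, t ∩ band d n := by rw [← Set.inter_iUnion, iUnion_band, Set.inter_univ]
    rw [kern_apply]
    conv_lhs => rw [this]
    rw [measure_iUnion ?_ fun n => ht.inter (measurable_band d n)]
    exact fun n m h => ((pairwise_band d) h).mono Set.inter_subset_right Set.inter_subset_right
  rw [hsum]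
  exact Kernel.isSFiniteKernel_sum (hκs := fun p => haveI := hfin p; inferInstance)


/-- the inner integral -/
def eF (Ψ : Ω → Measure (Rd d)) (F : Ω → Rd d → Rd d → ℝ) (C : Set (Rd d)) (ω : Ω) (x : Rd d) : ℝ≥0∞ :=
  ∫⁻ ξ in C, ENNReal.ofReal (F ω x ξ) ∂(Ψ ω)

/-- the mass of `F` transported from `B` to `C` -/
def mF (P : Measure Ω) (Φ Ψ : Ω → Measure (Rd d)) (F : Ω → Rd d → Rd d → ℝ)
    (B C : Set (Rd d)) : ℝ≥0∞ :=
  ∫⁻ ω, ∫⁻ x in B, eF Ψ F C ω x ∂(Φ ω) ∂P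

theorem meas_eF {Ψ : Ω → Measure (Rd d)} (hΨ : IsRandomMeasure Ψ)
    {F : Ω → Rd d → Rd d → ℝ} (hFm : Measurable (fun p : Ω × Rd d × Rd d => F p.1 p.2.1 p.2.2))
    {C : Set (Rd d)} (hC : MeasurableSet C) :
    Measurable (fun p : Ω × Rd d => eF Ψ F C p.1 p.2) := by
  haveI := kern_sfinite Ψ hΨ
  have hu : Measurable (uncurry fun (p : Ω × Rd d) ξ => ENNReal.ofReal (F p.1 p.2 ξ)) :=
    ENNReal.measurable_ofReal.comp
      (hFm.comp ((measurable_fst.comp measurable_fst).prodMk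
        ((measurable_snd.comp measurable_fst).prodMk measurable_snd)))
  have h := Measurable.setLIntegral_kernel_prod_right
    (κ := (kern Ψ hΨ).comap Prod.fst measurable_fst)
    (f := fun (p : Ω × Rd d) ξ => ENNReal.ofReal (F p.1 p.2 ξ)) hu hC
  simpa only [Kernel.comap_apply, kern_apply, eF] using h

theorem meas_mInner {Φ Ψ : Ω → Measure (Rd d)} (hΦ : IsRandomMeasure Φ) (hΨ : IsRandomMeasure Ψ)
    {F : Ω → Rd d → Rd d → ℝ} (hFm : Measurable (fun p : Ω × Rd d × Rd d => F p.1 p.2.1 p.2.2))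
    {B C : Set (Rd d)} (hB : MeasurableSet B) (hC : MeasurableSet C) :
    Measurable (fun ω => ∫⁻ x in B, eF Ψ F C ω x ∂(Φ ω)) := by
  haveI := kern_sfinite Φ hΦ
  have h := Measurable.setLIntegral_kernel_prod_right (κ := kern Φ hΦ)
    (f := fun ω x => eF Ψ F C ω x) (meas_eF hΨ hFm hC) hB
  simpa only [kern_apply] using h

section flow
variable {θ : Rd d → Ω → Ω}

theorem measurable_theta (hflow : IsMeasurableFlow θ) (s : Rd d) : Measurable (θ s) :=
  hflow.1.comp (measurable_const.prodMk measurable_id)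

theorem shift_measure_eq {Φ : Ω → Measure (Rd d)} (hΦa : FlowAdaptedMeasure θ Φ)
    (ω : Ω) (s : Rd d) : Φ (θ s ω) = Measure.map (fun x => x - s) (Φ ω) := by
  have hsub : Measurable (fun x : Rd d => x - s) := measurable_id.sub_const s
  ext B hB
  rw [Measure.map_apply hsub hB, hΦa ω s B hB]
  congr 1
  ext x
  constructor
  · rintro ⟨b, hb, rfl⟩
    simpa [Set.mem_preimage] using hb
  · intro hx
    exact ⟨x - s, hx, sub_add_cancel x s⟩

theorem lintegral_theta {P : Measure Ω} (hflow : IsMeasurableFlow θ) (hinv : IsFlowInvariant θ P)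
    {h : Ω → ℝ≥0∞} (hh : Measurable h) (s : Rd d) :
    ∫⁻ ω, h (θ s ω) ∂P = ∫⁻ ω, h ω ∂P := by
  conv_rhs => rw [← hinv s]
  rw [lintegral_map hh (measurable_theta hflow s)]

theorem eF_shift {Ψ : Ω → Measure (Rd d)} (hΨa : FlowAdaptedMeasure θ Ψ)
    {F : Ω → Rd d → Rd d → ℝ} (hFm : Measurable (fun p : Ω × Rd d × Rd d => F p.1 p.2.1 p.2.2))
    (hFa : ∀ ω s x ξ, F (θ s ω) x ξ = F ω (x + s) (ξ + s))
    {C : Set (Rd d)} (hC : MeasurableSet C) (s : Rd d) (ω : Ω) (x : Rd d) :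
    eF Ψ F ((· + s) ⁻¹' C) (θ s ω) x = eF Ψ F C ω (x + s) := by
  have hFxm : Measurable fun ξ => ENNReal.ofReal (F (θ s ω) x ξ) :=
    ENNReal.measurable_ofReal.comp
      ((hFm.comp (measurable_const.prodMk (measurable_const.prodMk measurable_id))))
  have hsub : Measurable (fun x : Rd d => x - s) := measurable_id.sub_const s
  have hadd : Measurable (fun x : Rd d => x + s) := measurable_id.add_const s
  unfold eF
  rw [shift_measure_eq hΨa ω s, setLIntegral_map (hadd hC) hFxm hsub]
  have hset : (fun x => x - s) ⁻¹' ((· + s) ⁻¹' C) = C := by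
    ext ξ; simp [Set.mem_preimage, sub_add_cancel]
  rw [hset]
  refine setLIntegral_congr_fun hC (fun ξ _ => ?_)
  rw [hFa ω s x (ξ - s), sub_add_cancel]

end flow

/-- The lattice vector associated to `z : Fin d → ℤ`. -/
def zvec (d : ℕ) (z : Fin d → ℤ) : Rd d := (WithLp.equiv 2 (Fin d → ℝ)).symm (fun i => (z i : ℝ))

/-- The half-open unit box. -/
def Qbox (d : ℕ) : Set (Rd d) := {x | ∀ i, x i ∈ Set.Ico (0:ℝ) 1}

/-- Its lattice translates. -/
def Qz (d : ℕ) (z : Fin d → ℤ) : Set (Rd d) := (· + zvec d z) ⁻¹' Qbox d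

lemma mem_Qz {z : Fin d → ℤ} {x : Rd d} : x ∈ Qz d z ↔ ∀ i, x i + (z i : ℝ) ∈ Set.Ico (0:ℝ) 1 := by
  simp only [Qz, Set.mem_preimage, Qbox, Set.mem_setOf_eq]
  constructor <;> intro h i <;> simpa [zvec, WithLp.equiv_symm_apply, WithLp.ofLp_toLp] using h i

lemma measurableSet_Qbox : MeasurableSet (Qbox d) := by
  have : Qbox d = ⋂ i, (fun x : Rd d => x i) ⁻¹' Set.Ico (0:ℝ) 1 := by
    ext x; simp [Qbox]
  rw [this]
  exact MeasurableSet.iInter fun i => ((measurable_pi_apply i).comp (WithLp.measurable_ofLp 2 (Fin d → ℝ))) measurableSet_Ico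

lemma measurableSet_Qz (z : Fin d → ℤ) : MeasurableSet (Qz d z) :=
  (measurable_id.add_const (zvec d z)) measurableSet_Qbox

lemma isBounded_Qbox : IsBounded (Qbox d) := by
  refine (isBounded_closedBall (x := (0 : Rd d)) (r := Real.sqrt d)).subset ?_
  intro x hx
  simp only [mem_closedBall, dist_zero_right]
  rw [EuclideanSpace.norm_eq]
  apply Real.sqrt_le_sqrt
  calc (∑ i, ‖x i‖ ^ 2) ≤ ∑ _i : Fin d, (1:ℝ) := by
        refine Finset.sum_le_sum fun i _ => ?_
        have h1 : |x i| ≤ 1 := by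
          rw [abs_le]; exact ⟨by linarith [(hx i).1], (hx i).2.le⟩
        rw [Real.norm_eq_abs]
        nlinarith [abs_nonneg (x i)]
    _ = (d : ℝ) := by simp

lemma isBounded_Qz (z : Fin d → ℤ) : IsBounded (Qz d z) := by
  obtain ⟨r, hr⟩ := (isBounded_iff_subset_closedBall (0 : Rd d)).1 isBounded_Qbox
  refine (isBounded_closedBall (x := -zvec d z) (r := r)).subset ?_
  intro x hx
  have := hr hx
  simp only [mem_closedBall] at this ⊢
  calc dist x (-zvec d z) = dist (x + zvec d z) 0 := by
        rw [dist_eq_norm, dist_eq_norm, sub_zero, sub_neg_eq_add]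
    _ ≤ r := this

lemma volume_Qbox : volume (Qbox d) = 1 := by
  have hpre : Qbox d = (MeasurableEquiv.toLp 2 (Fin d → ℝ)).symm ⁻¹'
      (Set.univ.pi fun _ => Set.Ico (0:ℝ) 1) := by
    ext x
    simp [Qbox, Set.mem_pi]
  rw [hpre, (EuclideanSpace.volume_preserving_symm_measurableEquiv_toLp (Fin d)).measure_preimage
    ((MeasurableSet.univ_pi fun _ => measurableSet_Ico).nullMeasurableSet)]
  rw [volume_pi_pi]
  simp [Real.volume_Ico]

lemma volume_Qz (z : Fin d → ℤ) : volume (Qz d z) = 1 := by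
  rw [Qz, measure_preimage_add_right volume (zvec d z) (Qbox d), volume_Qbox]

lemma existsUnique_Qz (x : Rd d) : ∃! z : Fin d → ℤ, x ∈ Qz d z := by
  refine ⟨fun i => -⌊x i⌋, mem_Qz.2 fun i => ?_, ?_⟩
  · push_cast
    constructor
    · linarith [Int.floor_le (x i)]
    · linarith [Int.lt_floor_add_one (x i)]
  · intro z hz
    funext i
    have h := mem_Qz.1 hz i
    have h0 : ⌊x i + (z i : ℝ)⌋ = 0 := Int.floor_eq_zero_iff.2 (by exact ⟨h.1, h.2⟩)
    rw [Int.floor_add_intCast] at h0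
    omega

lemma pairwise_disjoint_Qz : Pairwise (Function.onFun Disjoint (Qz d)) := by
  intro z z' h
  refine Set.disjoint_left.2 fun x hx hx' => h ?_
  obtain ⟨w, _, hw⟩ := existsUnique_Qz x
  rw [hw z hx, hw z' hx']

lemma iUnion_Qz : (⋃ z : Fin d → ℤ, Qz d z) = Set.univ := by
  ext x
  simp only [Set.mem_iUnion, Set.mem_univ, iff_true]
  exact (existsUnique_Qz x).exists

lemma Qz_neg_preimage (z : Fin d → ℤ) :
    (· + zvec d z) ⁻¹' (Qz d (-z)) = Qbox d := by
  ext x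
  rw [Set.mem_preimage, mem_Qz]
  have key : ∀ i, (x + zvec d z) i + ((-z) i : ℝ) = x i := fun i => by
    simp only [PiLp.add_apply, zvec, WithLp.equiv_symm_apply, WithLp.ofLp_toLp, Pi.neg_apply, Int.cast_neg]
    ring
  simp only [key]
  rfl


section mf
variable {Ω : Type*} [MeasurableSpace Ω] {d : ℕ} {θ : Rd d → Ω → Ω} {P : Measure Ω}
  {Φ Ψ : Ω → Measure (Rd d)} {F : Ω → Rd d → Rd d → ℝ}

set_option maxHeartbeats 1000000 in
theorem mF_inv (hflow : IsMeasurableFlow θ) (hinv : IsFlowInvariant θ P)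
    (hΦ : IsRandomMeasure Φ) (hΨ : IsRandomMeasure Ψ)
    (hΦa : FlowAdaptedMeasure θ Φ) (hΨa : FlowAdaptedMeasure θ Ψ)
    (hF : FlowAdaptedKernel θ F) {B C : Set (Rd d)} (hB : MeasurableSet B)
    (hC : MeasurableSet C) (s : Rd d) :
    mF P Φ Ψ F ((· + s) ⁻¹' B) ((· + s) ⁻¹' C) = mF P Φ Ψ F B C := by
  obtain ⟨hFm, hFa⟩ := hF
  have hsub : Measurable (fun x : Rd d => x - s) := measurable_id.sub_const s
  have hadd : Measurable (fun x : Rd d => x + s) := measurable_id.add_const s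
  have hmeas : Measurable (fun ω => ∫⁻ x in (· + s) ⁻¹' B, eF Ψ F ((· + s) ⁻¹' C) ω x ∂(Φ ω)) :=
    meas_mInner hΦ hΨ hFm (hadd hB) (hadd hC)
  have key : ∀ ω, (∫⁻ x in (· + s) ⁻¹' B, eF Ψ F ((· + s) ⁻¹' C) (θ s ω) x ∂(Φ (θ s ω)))
      = ∫⁻ x in B, eF Ψ F C ω x ∂(Φ ω) := by
    intro ω
    have hem : Measurable fun x => eF Ψ F ((· + s) ⁻¹' C) (θ s ω) x := by
      have h := meas_eF hΨ hFm (hadd hC)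
      have h2 : Measurable ((fun p : Ω × Rd d => eF Ψ F ((· + s) ⁻¹' C) p.1 p.2) ∘
          (fun x : Rd d => (θ s ω, x))) := h.comp (measurable_const.prodMk measurable_id)
      exact h2
    rw [shift_measure_eq hΦa ω s, setLIntegral_map (hadd hB) hem hsub]
    have hset : (fun x => x - s) ⁻¹' ((· + s) ⁻¹' B) = B := by
      ext y; simp [Set.mem_preimage, sub_add_cancel]
    rw [hset]
    refine setLIntegral_congr_fun hB (fun x _ => ?_)
    rw [eF_shift hΨa hFm hFa hC s ω (x - s), sub_add_cancel]
  calc mF P Φ Ψ F ((· + s) ⁻¹' B) ((· + s) ⁻¹' C)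
      = ∫⁻ ω, (∫⁻ x in (· + s) ⁻¹' B, eF Ψ F ((· + s) ⁻¹' C) (θ s ω) x ∂(Φ (θ s ω))) ∂P :=
        (lintegral_theta hflow hinv hmeas s).symm
    _ = ∫⁻ ω, ∫⁻ x in B, eF Ψ F C ω x ∂(Φ ω) ∂P := lintegral_congr key

theorem mF_iUnion_right (hΦ : IsRandomMeasure Φ) (hΨ : IsRandomMeasure Ψ)
    (hFm : Measurable (fun p : Ω × Rd d × Rd d => F p.1 p.2.1 p.2.2))
    {B : Set (Rd d)} (hB : MeasurableSet B) {ι : Type*} [Countable ι] {C : ι → Set (Rd d)}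
    (hC : ∀ i, MeasurableSet (C i)) (hdis : Pairwise (Function.onFun Disjoint C)) :
    mF P Φ Ψ F B (⋃ i, C i) = ∑' i, mF P Φ Ψ F B (C i) := by
  have h1 : ∀ ω x, eF Ψ F (⋃ i, C i) ω x = ∑' i, eF Ψ F (C i) ω x := fun ω x =>
    lintegral_iUnion hC hdis _
  have h2 : ∀ ω, ∫⁻ x in B, eF Ψ F (⋃ i, C i) ω x ∂(Φ ω)
      = ∑' i, ∫⁻ x in B, eF Ψ F (C i) ω x ∂(Φ ω) := by
    intro ω
    simp_rw [h1]
    refine lintegral_tsum fun i => Measurable.aemeasurable ?_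
    have h := meas_eF hΨ hFm (hC i)
    have h2 : Measurable ((fun p : Ω × Rd d => eF Ψ F (C i) p.1 p.2) ∘
        (fun x : Rd d => (ω, x))) := h.comp (measurable_const.prodMk measurable_id)
    exact h2
  unfold mF
  simp_rw [h2]
  exact lintegral_tsum fun i => (meas_mInner hΦ hΨ hFm hB (hC i)).aemeasurable

theorem mF_iUnion_left (hΦ : IsRandomMeasure Φ) (hΨ : IsRandomMeasure Ψ)
    (hFm : Measurable (fun p : Ω × Rd d × Rd d => F p.1 p.2.1 p.2.2))
    {ι : Type*} [Countable ι] {B : ι → Set (Rd d)}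
    (hB : ∀ i, MeasurableSet (B i)) (hdis : Pairwise (Function.onFun Disjoint B))
    {C : Set (Rd d)} (hC : MeasurableSet C) :
    mF P Φ Ψ F (⋃ i, B i) C = ∑' i, mF P Φ Ψ F (B i) C := by
  unfold mF
  have h : ∀ ω, ∫⁻ x in ⋃ i, B i, eF Ψ F C ω x ∂(Φ ω)
      = ∑' i, ∫⁻ x in B i, eF Ψ F C ω x ∂(Φ ω) := fun ω => lintegral_iUnion hB hdis _
  simp_rw [h]
  exact lintegral_tsum fun i => (meas_mInner hΦ hΨ hFm (hB i) hC).aemeasurable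

theorem mF_fubini (hΦ : IsRandomMeasure Φ) (hΨ : IsRandomMeasure Ψ)
    (hFm : Measurable (fun p : Ω × Rd d × Rd d => F p.1 p.2.1 p.2.2))
    {B C : Set (Rd d)} :
    mF P Φ Ψ F B C = mF P Ψ Φ (fun ω ξ x => F ω x ξ) C B := by
  unfold mF eF
  refine lintegral_congr fun ω => ?_
  haveI := sigmaFinite_of_locFin (hΦ.2 ω)
  haveI := sigmaFinite_of_locFin (hΨ.2 ω)
  have hm : AEMeasurable (uncurry fun (x ξ : Rd d) => ENNReal.ofReal (F ω x ξ))
      (((Φ ω).restrict B).prod ((Ψ ω).restrict C)) := by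
    apply Measurable.aemeasurable
    exact ENNReal.measurable_ofReal.comp (hFm.comp (measurable_const.prodMk measurable_id))
  exact lintegral_lintegral_swap hm

end mf


section analysis
variable {Ω : Type*} [MeasurableSpace Ω] {d : ℕ} {θ : Rd d → Ω → Ω} {P : Measure Ω}
  {Φ Ψ : Ω → Measure (Rd d)} {F : Ω → Rd d → Rd d → ℝ} {lam : ℝ≥0∞}

theorem aux_pt {X : Type*} [MeasurableSpace X] {μ : Measure X} {g : X → ℝ≥0∞}
    (hg : Measurable g) (hg1 : ∀ x, g x ≤ 1) {S : Set X} (hS : MeasurableSet S)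
    (hfin : μ S < ⊤) :
    (∫⁻ x in S, g x ∂μ = μ S ↔ μ ({x | g x < 1} ∩ S) = 0) := by
  have hUm : MeasurableSet {x | g x < 1} := measurableSet_lt hg measurable_const
  constructor
  · intro he
    have hgfin : ∫⁻ x in S, g x ∂μ ≠ ⊤ := by rw [he]; exact hfin.ne
    have hsub : ∫⁻ x in S, (1 - g x) ∂μ = 0 := by
      rw [lintegral_sub hg hgfin (Filter.Eventually.of_forall hg1), setLIntegral_one, he,
        tsub_self]
    have h0 : ∀ᵐ x ∂(μ.restrict S), (1 : ℝ≥0∞) - g x = 0 :=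
      (lintegral_eq_zero_iff (measurable_const.sub hg)).1 hsub
    have h1 : ∀ᵐ x ∂(μ.restrict S), ¬ (g x < 1) :=
      h0.mono fun x hx => not_lt.2 (tsub_eq_zero_iff_le.1 hx)
    have h2 := ae_iff.1 h1
    simp only [not_not] at h2
    rwa [Measure.restrict_apply hUm] at h2
  · intro h0
    have hae : ∀ᵐ x ∂(μ.restrict S), g x = 1 := by
      have hmm : MeasurableSet {a | ¬ g a = 1} := (hg (measurableSet_singleton 1)).compl
      rw [ae_iff, Measure.restrict_apply hmm]
      refine measure_mono_null ?_ h0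
      rintro x ⟨hx1, hx2⟩
      exact ⟨lt_of_le_of_ne (hg1 x) hx1, hx2⟩
    calc ∫⁻ x in S, g x ∂μ = ∫⁻ _x in S, 1 ∂μ := lintegral_congr_ae hae
      _ = μ S := setLIntegral_one S

theorem ae_eq_of_lintegral_le {μ : Measure Ω} {f g : Ω → ℝ≥0∞} (hf : Measurable f)
    (hg : Measurable g) (hle : ∀ᵐ ω ∂μ, f ω ≤ g ω) (hint : ∫⁻ ω, g ω ∂μ ≤ ∫⁻ ω, f ω ∂μ)
    (hfin : ∫⁻ ω, f ω ∂μ ≠ ⊤) : ∀ᵐ ω ∂μ, f ω = g ω := by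
  have hsub : ∫⁻ ω, (g ω - f ω) ∂μ = 0 := by
    rw [lintegral_sub hf hfin hle, tsub_eq_zero_iff_le.2 hint]
  have h0 := (lintegral_eq_zero_iff (hg.sub hf)).1 hsub
  filter_upwards [h0, hle] with ω h1 h2
  exact le_antisymm h2 (tsub_eq_zero_iff_le.1 h1)

theorem meas_setLintegral (hΦ : IsRandomMeasure Φ) {g : Ω × Rd d → ℝ≥0∞} (hg : Measurable g)
    {B : Set (Rd d)} (hB : MeasurableSet B) :
    Measurable fun ω => ∫⁻ x in B, g (ω, x) ∂(Φ ω) := by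
  haveI := kern_sfinite Φ hΦ
  have h := Measurable.setLIntegral_kernel_prod_right (κ := kern Φ hΦ)
    (f := fun ω x => g (ω, x)) hg hB
  simpa only [kern_apply] using h

/-- The set of unexhausted sites. -/
def Uset (Ψ : Ω → Measure (Rd d)) (F : Ω → Rd d → Rd d → ℝ) (ω : Ω) : Set (Rd d) :=
  {x | eF Ψ F Set.univ ω x < 1}

theorem meas_eF_pt (hΨ : IsRandomMeasure Ψ)
    (hFm : Measurable (fun p : Ω × Rd d × Rd d => F p.1 p.2.1 p.2.2)) (ω : Ω) :
    Measurable fun x => eF Ψ F Set.univ ω x := by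
  have h := meas_eF hΨ hFm (MeasurableSet.univ (α := Rd d))
  have h2 : Measurable ((fun p : Ω × Rd d => eF Ψ F Set.univ p.1 p.2) ∘
      (fun x : Rd d => (ω, x))) := h.comp (measurable_const.prodMk measurable_id)
  exact h2

theorem measurableSet_Uset (hΨ : IsRandomMeasure Ψ)
    (hFm : Measurable (fun p : Ω × Rd d × Rd d => F p.1 p.2.1 p.2.2)) (ω : Ω) :
    MeasurableSet (Uset Ψ F ω) :=
  measurableSet_lt (meas_eF_pt hΨ hFm ω) measurable_const

theorem PhiU_eq_lintegral (hΨ : IsRandomMeasure Ψ)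
    (hFm : Measurable (fun p : Ω × Rd d × Rd d => F p.1 p.2.1 p.2.2))
    (Φ : Ω → Measure (Rd d)) {B : Set (Rd d)} (hB : MeasurableSet B) (ω : Ω) :
    Φ ω (Uset Ψ F ω ∩ B) = ∫⁻ x in B,
      ({p : Ω × Rd d | eF Ψ F Set.univ p.1 p.2 < 1}.indicator
        (fun _ => (1:ℝ≥0∞)) (ω, x)) ∂(Φ ω) := by
  rw [← Measure.restrict_apply (measurableSet_Uset hΨ hFm ω),
    ← lintegral_indicator_one (measurableSet_Uset hΨ hFm ω)]
  refine lintegral_congr fun x => ?_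
  by_cases h : eF Ψ F Set.univ ω x < 1 <;>
    simp [Set.indicator_apply, Uset, h]

theorem meas_PhiU (hΦ : IsRandomMeasure Φ) (hΨ : IsRandomMeasure Ψ)
    (hFm : Measurable (fun p : Ω × Rd d × Rd d => F p.1 p.2.1 p.2.2))
    {B : Set (Rd d)} (hB : MeasurableSet B) :
    Measurable fun ω => Φ ω (Uset Ψ F ω ∩ B) := by
  have hSm : MeasurableSet {p : Ω × Rd d | eF Ψ F Set.univ p.1 p.2 < 1} :=
    measurableSet_lt (meas_eF hΨ hFm MeasurableSet.univ) measurable_const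
  have hind : Measurable ({p : Ω × Rd d | eF Ψ F Set.univ p.1 p.2 < 1}.indicator
      (fun _ => (1:ℝ≥0∞))) := measurable_const.indicator hSm
  have h := meas_setLintegral hΦ hind hB
  have heq : (fun ω => Φ ω (Uset Ψ F ω ∩ B)) = fun ω => ∫⁻ x in B,
      ({p : Ω × Rd d | eF Ψ F Set.univ p.1 p.2 < 1}.indicator
        (fun _ => (1:ℝ≥0∞)) (ω, x)) ∂(Φ ω) :=
    funext fun ω => PhiU_eq_lintegral hΨ hFm Φ hB ω
  rw [heq]
  exact h

theorem Uset_shift (hΨa : FlowAdaptedMeasure θ Ψ)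
    (hFm : Measurable (fun p : Ω × Rd d × Rd d => F p.1 p.2.1 p.2.2))
    (hFa : ∀ ω s x ξ, F (θ s ω) x ξ = F ω (x + s) (ξ + s)) (s : Rd d) (ω : Ω) :
    Uset Ψ F (θ s ω) = (· + s) ⁻¹' (Uset Ψ F ω) := by
  ext x
  simp only [Uset, Set.mem_setOf_eq, Set.mem_preimage]
  have h := eF_shift hΨa hFm hFa (MeasurableSet.univ (α := Rd d)) s ω x
  rw [Set.preimage_univ] at h
  rw [h]

theorem PhiU_shift (hΦa : FlowAdaptedMeasure θ Φ) (hΨa : FlowAdaptedMeasure θ Ψ)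
    (hΨ : IsRandomMeasure Ψ)
    (hFm : Measurable (fun p : Ω × Rd d × Rd d => F p.1 p.2.1 p.2.2))
    (hFa : ∀ ω s x ξ, F (θ s ω) x ξ = F ω (x + s) (ξ + s))
    {B : Set (Rd d)} (hB : MeasurableSet B) (s : Rd d) (ω : Ω) :
    Φ (θ s ω) (Uset Ψ F (θ s ω) ∩ B) = Φ ω (Uset Ψ F ω ∩ (· - s) ⁻¹' B) := by
  have hsub : Measurable (fun x : Rd d => x - s) := measurable_id.sub_const s
  have hadd : Measurable (fun x : Rd d => x + s) := measurable_id.add_const s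
  have hU := measurableSet_Uset hΨ hFm ω
  rw [Uset_shift hΨa hFm hFa s ω, shift_measure_eq hΦa ω s,
    Measure.map_apply hsub ((hadd hU).inter hB)]
  congr 1
  ext x
  simp only [Set.mem_preimage, Set.mem_inter_iff, sub_add_cancel]

theorem EU_translate (hflow : IsMeasurableFlow θ) (hinv : IsFlowInvariant θ P)
    (hΦ : IsRandomMeasure Φ) (hΨ : IsRandomMeasure Ψ)
    (hΦa : FlowAdaptedMeasure θ Φ) (hΨa : FlowAdaptedMeasure θ Ψ)
    (hFm : Measurable (fun p : Ω × Rd d × Rd d => F p.1 p.2.1 p.2.2))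
    (hFa : ∀ ω s x ξ, F (θ s ω) x ξ = F ω (x + s) (ξ + s))
    {B : Set (Rd d)} (hB : MeasurableSet B) (s : Rd d) :
    ∫⁻ ω, Φ ω (Uset Ψ F ω ∩ (· - s) ⁻¹' B) ∂P = ∫⁻ ω, Φ ω (Uset Ψ F ω ∩ B) ∂P := by
  rw [← lintegral_theta hflow hinv (meas_PhiU hΦ hΨ hFm hB) s]
  exact lintegral_congr fun ω => (PhiU_shift hΦa hΨa hΨ hFm hFa hB s ω).symm

theorem PU_zero_or_one (hflow : IsMeasurableFlow θ) (herg : IsErgodicFlow θ P)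
    (hΦ : IsRandomMeasure Φ) (hΨ : IsRandomMeasure Ψ)
    (hΦa : FlowAdaptedMeasure θ Φ) (hΨa : FlowAdaptedMeasure θ Ψ)
    (hFm : Measurable (fun p : Ω × Rd d × Rd d => F p.1 p.2.1 p.2.2))
    (hFa : ∀ ω s x ξ, F (θ s ω) x ξ = F ω (x + s) (ξ + s)) :
    P {ω | Φ ω (Uset Ψ F ω) ≠ 0} = 0 ∨ P {ω | Φ ω (Uset Ψ F ω) ≠ 0} = 1 := by
  have hmeas : Measurable fun ω => Φ ω (Uset Ψ F ω) := by
    have h := meas_PhiU (F := F) hΦ hΨ hFm (MeasurableSet.univ (α := Rd d))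
    simpa only [Set.inter_univ] using h
  have hms : MeasurableSet {ω | Φ ω (Uset Ψ F ω) ≠ 0} := by
    have : {ω | Φ ω (Uset Ψ F ω) ≠ 0}
        = (fun ω => Φ ω (Uset Ψ F ω)) ⁻¹' ({0}ᶜ) := rfl
    rw [this]
    exact hmeas (measurableSet_singleton 0).compl
  refine herg _ hms fun s => ?_
  ext ω
  simp only [Set.mem_preimage, Set.mem_setOf_eq]
  have h : Φ (θ s ω) (Uset Ψ F (θ s ω)) = Φ ω (Uset Ψ F ω) := by
    have h2 := PhiU_shift (Φ := Φ) hΦa hΨa hΨ hFm hFa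
      (MeasurableSet.univ (α := Rd d)) s ω
    simpa only [Set.inter_univ, Set.preimage_univ] using h2
  rw [h]

theorem mF_le_intensity (hΦ : IsRandomMeasure Φ) (hΨ : IsRandomMeasure Ψ)
    (hFm : Measurable (fun p : Ω × Rd d × Rd d => F p.1 p.2.1 p.2.2))
    (hΦi : HasIntensity P Φ lam)
    (hae : ∀ᵐ ω ∂P, ∀ x, eF Ψ F Set.univ ω x ≤ 1) {B : Set (Rd d)} (hB : MeasurableSet B) :
    mF P Φ Ψ F B Set.univ ≤ lam * volume B := by
  rw [← hΦi B hB]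
  refine lintegral_mono_ae (hae.mono fun ω h1 => ?_)
  calc ∫⁻ x in B, eF Ψ F Set.univ ω x ∂(Φ ω) ≤ ∫⁻ _x in B, 1 ∂(Φ ω) :=
      lintegral_mono fun x => h1 x
    _ = Φ ω B := setLIntegral_one B

theorem side_null_iff (hΦ : IsRandomMeasure Φ) (hΨ : IsRandomMeasure Ψ)
    (hFm : Measurable (fun p : Ω × Rd d × Rd d => F p.1 p.2.1 p.2.2))
    (hΦi : HasIntensity P Φ lam) (hlamfin : lam ≠ ⊤)
    (hae : ∀ᵐ ω ∂P, ∀ x, eF Ψ F Set.univ ω x ≤ 1)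
    {B : Set (Rd d)} (hB : MeasurableSet B) (hBb : IsBounded B) (hvol : volume B ≠ ⊤) :
    mF P Φ Ψ F B Set.univ = lam * volume B ↔ ∀ᵐ ω ∂P, Φ ω (Uset Ψ F ω ∩ B) = 0 := by
  have hfin : ∀ ω, Φ ω B < ⊤ := fun ω => hΦ.2 ω B hBb
  have hmg : Measurable fun ω => ∫⁻ x in B, eF Ψ F Set.univ ω x ∂(Φ ω) :=
    meas_mInner hΦ hΨ hFm hB MeasurableSet.univ
  have hmh : Measurable fun ω => Φ ω B := hΦ.1 B hB
  have hUB : ∀ ω, Uset Ψ F ω ∩ B = {x | eF Ψ F Set.univ ω x < 1} ∩ B := fun ω => rfl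
  constructor
  · intro heq
    have hle : ∀ᵐ ω ∂P, (∫⁻ x in B, eF Ψ F Set.univ ω x ∂(Φ ω)) ≤ Φ ω B :=
      hae.mono fun ω h1 => by
        calc ∫⁻ x in B, eF Ψ F Set.univ ω x ∂(Φ ω) ≤ ∫⁻ _x in B, 1 ∂(Φ ω) :=
            lintegral_mono fun x => h1 x
          _ = Φ ω B := setLIntegral_one B
    have hEq2 : ∫⁻ ω, Φ ω B ∂P
        = ∫⁻ ω, (∫⁻ x in B, eF Ψ F Set.univ ω x ∂(Φ ω)) ∂P := by
      rw [hΦi B hB]; exact heq.symm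
    have hfin2 : ∫⁻ ω, (∫⁻ x in B, eF Ψ F Set.univ ω x ∂(Φ ω)) ∂P ≠ ⊤ := by
      have : mF P Φ Ψ F B Set.univ ≠ ⊤ := by
        rw [heq]; exact ENNReal.mul_ne_top hlamfin hvol
      exact this
    have hane := ae_eq_of_lintegral_le hmg hmh hle hEq2.le hfin2
    filter_upwards [hane, hae] with ω h1 h2
    exact (aux_pt (meas_eF_pt hΨ hFm ω) h2 hB (hfin ω)).1 h1
  · intro hnull
    rw [← hΦi B hB]
    refine lintegral_congr_ae ?_
    filter_upwards [hnull, hae] with ω h1 h2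
    exact (aux_pt (meas_eF_pt hΨ hFm ω) h2 hB (hfin ω)).2 h1

end analysis


section mtp
variable {Ω : Type*} [MeasurableSpace Ω] {d : ℕ} {θ : Rd d → Ω → Ω} {P : Measure Ω}
  {Φ Ψ : Ω → Measure (Rd d)} {F : Ω → Rd d → Rd d → ℝ}

theorem eF_univ (Ψ : Ω → Measure (Rd d)) (F : Ω → Rd d → Rd d → ℝ) (ω : Ω) (x : Rd d) :
    eF Ψ F Set.univ ω x = ∫⁻ ξ, ENNReal.ofReal (F ω x ξ) ∂(Ψ ω) := by
  unfold eF; rw [Measure.restrict_univ]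

theorem mF_MTP (hflow : IsMeasurableFlow θ) (hinv : IsFlowInvariant θ P)
    (hΦ : IsRandomMeasure Φ) (hΨ : IsRandomMeasure Ψ)
    (hΦa : FlowAdaptedMeasure θ Φ) (hΨa : FlowAdaptedMeasure θ Ψ)
    (hF : FlowAdaptedKernel θ F) :
    mF P Φ Ψ F (Qbox d) Set.univ = mF P Φ Ψ F Set.univ (Qbox d) := by
  have hFm := hF.1
  have h1 : mF P Φ Ψ F (Qbox d) Set.univ
      = ∑' z : Fin d → ℤ, mF P Φ Ψ F (Qbox d) (Qz d z) := by
    conv_lhs => rw [← iUnion_Qz (d := d)]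
    exact mF_iUnion_right hΦ hΨ hFm measurableSet_Qbox measurableSet_Qz pairwise_disjoint_Qz
  have h2 : ∀ z : Fin d → ℤ, mF P Φ Ψ F (Qbox d) (Qz d z)
      = mF P Φ Ψ F (Qz d (-z)) (Qbox d) := by
    intro z
    have h := mF_inv hflow hinv hΦ hΨ hΦa hΨa hF (measurableSet_Qz (-z)) measurableSet_Qbox
      (zvec d z)
    rw [Qz_neg_preimage] at h
    have h2 : ((fun x => x + zvec d z) ⁻¹' Qbox d) = Qz d z := rfl
    rw [h2] at h
    exact h
  have h3 : ∑' z : Fin d → ℤ, mF P Φ Ψ F (Qz d (-z)) (Qbox d)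
      = ∑' z : Fin d → ℤ, mF P Φ Ψ F (Qz d z) (Qbox d) :=
    (Equiv.neg (Fin d → ℤ)).tsum_eq (fun z => mF P Φ Ψ F (Qz d z) (Qbox d))
  have h4 : mF P Φ Ψ F Set.univ (Qbox d)
      = ∑' z : Fin d → ℤ, mF P Φ Ψ F (Qz d z) (Qbox d) := by
    conv_lhs => rw [← iUnion_Qz (d := d)]
    exact mF_iUnion_left hΦ hΨ hFm measurableSet_Qz pairwise_disjoint_Qz measurableSet_Qbox
  rw [h1, h4]
  simp_rw [h2]
  exact h3

theorem mF_Qz (hflow : IsMeasurableFlow θ) (hinv : IsFlowInvariant θ P)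
    (hΦ : IsRandomMeasure Φ) (hΨ : IsRandomMeasure Ψ)
    (hΦa : FlowAdaptedMeasure θ Φ) (hΨa : FlowAdaptedMeasure θ Ψ)
    (hF : FlowAdaptedKernel θ F) (z : Fin d → ℤ) :
    mF P Φ Ψ F (Qz d z) Set.univ = mF P Φ Ψ F (Qbox d) Set.univ := by
  have h := mF_inv hflow hinv hΦ hΨ hΦa hΨa hF measurableSet_Qbox
    (MeasurableSet.univ (α := Rd d)) (zvec d z)
  rw [Set.preimage_univ] at h
  have h2 : ((fun x => x + zvec d z) ⁻¹' Qbox d) = Qz d z := rfl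
  rw [h2] at h
  exact h

theorem key_one {φ ψ : Measure (Rd d)} {f : Rd d → Rd d → ℝ} (hst : IsStableDensity φ ψ f)
    {x ξ : Rd d} (hx : Unexhausted ψ f x) (hξ : Unsated φ f ξ) : f x ξ = 1 := by
  by_contra h
  have hlt : f x ξ < 1 := lt_of_le_of_ne (hst.1.2 x ξ) h
  exact hst.2 ⟨x, ξ, ⟨hlt, Or.inl hx⟩, ⟨hlt, Or.inl hξ⟩⟩

theorem infinite_lattice (hd : 0 < d) : Infinite (Fin d → ℤ) := by
  haveI : Nonempty (Fin d) := ⟨⟨0, hd⟩⟩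
  exact Infinite.of_injective (fun n : ℤ => (fun _ => n : Fin d → ℤ))
    (fun a b h => congrFun h (Classical.arbitrary (Fin d)))

end mtp


section main

theorem main {Ω : Type*} [MeasurableSpace Ω] {d : ℕ} (hd : 0 < d)
    (P : Measure Ω) [IsProbabilityMeasure P]
    (θ : Rd d → Ω → Ω) (hflow : IsMeasurableFlow θ) (hinv : IsFlowInvariant θ P)
    (herg : IsErgodicFlow θ P)
    (Φ Ψ : Ω → Measure (Rd d)) (hΦ : IsRandomMeasure Φ) (hΨ : IsRandomMeasure Ψ)
    (hΦa : FlowAdaptedMeasure θ Φ) (hΨa : FlowAdaptedMeasure θ Ψ)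
    (lam : ℝ≥0∞) (hlam0 : 0 < lam) (hlamtop : lam < ⊤)
    (hΦi : HasIntensity P Φ lam) (hΨi : HasIntensity P Ψ lam)
    (F : Ω → Rd d → Rd d → ℝ) (hF : FlowAdaptedKernel θ F)
    (hstab : ∀ᵐ ω ∂P, IsStableDensity (Φ ω) (Ψ ω) (F ω)) :
    ∀ᵐ ω ∂P, Φ ω {x | Unexhausted (Ψ ω) (F ω) x} = 0 ∧
      Ψ ω {ξ | Unsated (Φ ω) (F ω) ξ} = 0 := by
  classical
  obtain ⟨hFm, hFa⟩ := hF
  -- the swapped kernel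
  set F' : Ω → Rd d → Rd d → ℝ := fun ω ξ x => F ω x ξ with hF'def
  have hF'm : Measurable (fun p : Ω × Rd d × Rd d => F' p.1 p.2.1 p.2.2) := by
    have : (fun p : Ω × Rd d × Rd d => F' p.1 p.2.1 p.2.2)
        = (fun p : Ω × Rd d × Rd d => F p.1 p.2.1 p.2.2) ∘
          (fun p : Ω × Rd d × Rd d => (p.1, p.2.2, p.2.1)) := rfl
    rw [this]
    exact hFm.comp (measurable_fst.prodMk
      ((measurable_snd.comp measurable_snd).prodMk (measurable_fst.comp measurable_snd)))
  have hF'a : ∀ ω s x ξ, F' (θ s ω) x ξ = F' ω (x + s) (ξ + s) := fun ω s x ξ => hFa ω s ξ x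
  have hF' : FlowAdaptedKernel θ F' := ⟨hF'm, hF'a⟩
  have hFk : FlowAdaptedKernel θ F := ⟨hFm, hFa⟩
  -- identification of the two "bad" sets
  have hU_eq : ∀ ω, {x | Unexhausted (Ψ ω) (F ω) x} = Uset Ψ F ω := by
    intro ω; ext x
    simp only [Unexhausted, Set.mem_setOf_eq, Uset, eF_univ]
  have hV_eq : ∀ ω, {ξ | Unsated (Φ ω) (F ω) ξ} = Uset Φ F' ω := by
    intro ω; ext ξ
    simp only [Unsated, Set.mem_setOf_eq, Uset, eF_univ, hF'def]
  -- a.e. bounds from sub-balancing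
  have hae : ∀ᵐ ω ∂P, ∀ x, eF Ψ F Set.univ ω x ≤ 1 :=
    hstab.mono fun ω h => fun x => by rw [eF_univ]; exact h.1.1.2.2.1 x
  have hae' : ∀ᵐ ω ∂P, ∀ ξ, eF Φ F' Set.univ ω ξ ≤ 1 :=
    hstab.mono fun ω h => fun ξ => by rw [eF_univ]; exact h.1.1.2.2.2 ξ
  have hlamfin : lam ≠ ⊤ := hlamtop.ne
  have hvol1 : (volume (Qbox d) : ℝ≥0∞) = 1 := volume_Qbox
  -- mass transport
  have hMM' : mF P Φ Ψ F (Qbox d) Set.univ = mF P Ψ Φ F' (Qbox d) Set.univ := by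
    rw [mF_MTP hflow hinv hΦ hΨ hΦa hΨa hFk]
    exact mF_fubini hΦ hΨ hFm
  have hMle : mF P Φ Ψ F (Qbox d) Set.univ ≤ lam := by
    have h := mF_le_intensity hΦ hΨ hFm hΦi hae measurableSet_Qbox
    rwa [hvol1, mul_one] at h
  -- main claim
  have hMeq : mF P Φ Ψ F (Qbox d) Set.univ = lam := by
    by_contra hne
    -- the V-side event has full measure
    have hBev01 := PU_zero_or_one (Φ := Ψ) (Ψ := Φ) (F := F') hflow herg hΨ hΦ hΨa hΦa hF'm hF'a
    have hBevne : P {ω | Ψ ω (Uset Φ F' ω) ≠ 0} ≠ 0 := by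
      intro h0
      have hael : ∀ᵐ ω ∂P, Ψ ω (Uset Φ F' ω) = 0 := by
        rw [ae_iff]; exact h0
      have hsubn : ∀ᵐ ω ∂P, Ψ ω (Uset Φ F' ω ∩ Qbox d) = 0 :=
        hael.mono fun ω h => measure_mono_null Set.inter_subset_left h
      have h1 := (side_null_iff hΨ hΦ hF'm hΨi hlamfin hae' measurableSet_Qbox
        isBounded_Qbox (by rw [hvol1]; exact ENNReal.one_ne_top)).2 hsubn
      rw [hvol1, mul_one] at h1
      exact hne (hMM'.trans h1)
    have hBev1 : P {ω | Ψ ω (Uset Φ F' ω) ≠ 0} = 1 := hBev01.resolve_left hBevne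
    have hmsB : MeasurableSet {ω | Ψ ω (Uset Φ F' ω) ≠ 0} := by
      have hmeas : Measurable fun ω => Ψ ω (Uset Φ F' ω) := by
        have h := meas_PhiU (Φ := Ψ) (Ψ := Φ) (F := F') hΨ hΦ hF'm
          (MeasurableSet.univ (α := Rd d))
        simpa only [Set.inter_univ] using h
      exact (hmeas (measurableSet_singleton 0)).compl
    have hBevae : ∀ᵐ ω ∂P, Ψ ω (Uset Φ F' ω) ≠ 0 := by
      rw [ae_iff]
      have hcompl : {ω | ¬ Ψ ω (Uset Φ F' ω) ≠ 0} = {ω | Ψ ω (Uset Φ F' ω) ≠ 0}ᶜ := by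
        ext ω; simp [Set.mem_compl_iff]
      rw [hcompl, measure_compl hmsB (measure_ne_top P _), hBev1, measure_univ, tsub_self]
    -- the expected U-mass in the unit box is positive
    have hc : ∫⁻ ω, Φ ω (Uset Ψ F ω ∩ Qbox d) ∂P ≠ 0 := by
      intro h0
      have hael := (lintegral_eq_zero_iff (meas_PhiU hΦ hΨ hFm measurableSet_Qbox)).1 h0
      have h1 := (side_null_iff hΦ hΨ hFm hΦi hlamfin hae measurableSet_Qbox
        isBounded_Qbox (by rw [hvol1]; exact ENNReal.one_ne_top)).2 hael
      rw [hvol1, mul_one] at h1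
      exact hne h1
    -- all lattice translates contribute the same
    have htr : ∀ z : Fin d → ℤ, ∫⁻ ω, Φ ω (Uset Ψ F ω ∩ Qz d z) ∂P
        = ∫⁻ ω, Φ ω (Uset Ψ F ω ∩ Qbox d) ∂P := by
      intro z
      have h := EU_translate hflow hinv hΦ hΨ hΦa hΨa hFm hFa measurableSet_Qbox (-(zvec d z))
      have hset : ((· - (-(zvec d z))) ⁻¹' Qbox d) = Qz d z := by
        ext x
        simp only [Set.mem_preimage, sub_neg_eq_add, Qz]
      rw [hset] at h
      exact h
    haveI : Infinite (Fin d → ℤ) := infinite_lattice hd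
    have hsum : ∫⁻ ω, Φ ω (Uset Ψ F ω) ∂P = ⊤ := by
      have hdecomp : ∀ ω, Φ ω (Uset Ψ F ω) = ∑' z : Fin d → ℤ, Φ ω (Uset Ψ F ω ∩ Qz d z) := by
        intro ω
        have hUorig : Uset Ψ F ω = ⋃ z : Fin d → ℤ, Uset Ψ F ω ∩ Qz d z := by
          rw [← Set.inter_iUnion, iUnion_Qz, Set.inter_univ]
        have hdis : Pairwise (Function.onFun Disjoint (fun z => Uset Ψ F ω ∩ Qz d z)) :=
          fun z z' hzz => (pairwise_disjoint_Qz hzz).mono Set.inter_subset_right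
            Set.inter_subset_right
        conv_lhs => rw [hUorig]
        exact measure_iUnion hdis fun z => (measurableSet_Uset hΨ hFm ω).inter
          (measurableSet_Qz z)
      calc ∫⁻ ω, Φ ω (Uset Ψ F ω) ∂P
          = ∫⁻ ω, ∑' z : Fin d → ℤ, Φ ω (Uset Ψ F ω ∩ Qz d z) ∂P := lintegral_congr hdecomp
        _ = ∑' z : Fin d → ℤ, ∫⁻ ω, Φ ω (Uset Ψ F ω ∩ Qz d z) ∂P :=
            lintegral_tsum fun z => (meas_PhiU hΦ hΨ hFm (measurableSet_Qz z)).aemeasurable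
        _ = ∑' _z : Fin d → ℤ, ∫⁻ ω, Φ ω (Uset Ψ F ω ∩ Qbox d) ∂P := tsum_congr htr
        _ = ⊤ := ENNReal.tsum_const_eq_top_of_ne_zero hc
    have hbd : ∫⁻ ω, Φ ω (Uset Ψ F ω) ∂P ≤ 1 := by
      have hone : ∀ᵐ ω ∂P, Φ ω (Uset Ψ F ω) ≤ 1 := by
        filter_upwards [hstab, hBevae] with ω hst hne0
        obtain ⟨ξ₀, hξ₀⟩ := nonempty_of_measure_ne_zero hne0
        have hUns : Unsated (Φ ω) (F ω) ξ₀ := by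
          have := hξ₀
          simp only [Uset, Set.mem_setOf_eq, eF_univ] at this
          exact this
        have hUb : Φ ω (Uset Ψ F ω) ≤ ∫⁻ x, ENNReal.ofReal (F ω x ξ₀) ∂(Φ ω) := by
          rw [← lintegral_indicator_one (measurableSet_Uset hΨ hFm ω)]
          refine lintegral_mono fun x => ?_
          by_cases hx : x ∈ Uset Ψ F ω
          · rw [Set.indicator_of_mem hx]
            have hx' : Unexhausted (Ψ ω) (F ω) x := by
              have := hx
              simp only [Uset, Set.mem_setOf_eq, eF_univ] at this
              exact this
            rw [key_one hst hx' hUns]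
            simp
          · rw [Set.indicator_of_notMem hx]
            exact zero_le
        exact hUb.trans (hst.1.1.2.2.2 ξ₀)
      calc ∫⁻ ω, Φ ω (Uset Ψ F ω) ∂P ≤ ∫⁻ _ω, 1 ∂P := lintegral_mono_ae hone
        _ = 1 := by simp
    rw [hsum] at hbd
    simp at hbd
  have hM'eq : mF P Ψ Φ F' (Qbox d) Set.univ = lam := hMM'.symm.trans hMeq
  -- conclude: per-translate nullity on both sides
  have hΦz : ∀ z : Fin d → ℤ, ∀ᵐ ω ∂P, Φ ω (Uset Ψ F ω ∩ Qz d z) = 0 := by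
    intro z
    refine (side_null_iff hΦ hΨ hFm hΦi hlamfin hae (measurableSet_Qz z) (isBounded_Qz z)
      (by rw [volume_Qz]; exact ENNReal.one_ne_top)).1 ?_
    rw [mF_Qz hflow hinv hΦ hΨ hΦa hΨa hFk z, volume_Qz, mul_one]
    exact hMeq
  have hΨz : ∀ z : Fin d → ℤ, ∀ᵐ ω ∂P, Ψ ω (Uset Φ F' ω ∩ Qz d z) = 0 := by
    intro z
    refine (side_null_iff hΨ hΦ hF'm hΨi hlamfin hae' (measurableSet_Qz z) (isBounded_Qz z)
      (by rw [volume_Qz]; exact ENNReal.one_ne_top)).1 ?_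
    rw [mF_Qz hflow hinv hΨ hΦ hΨa hΦa hF' z, volume_Qz, mul_one]
    exact hM'eq
  have hΦall : ∀ᵐ ω ∂P, ∀ z : Fin d → ℤ, Φ ω (Uset Ψ F ω ∩ Qz d z) = 0 := ae_all_iff.2 hΦz
  have hΨall : ∀ᵐ ω ∂P, ∀ z : Fin d → ℤ, Ψ ω (Uset Φ F' ω ∩ Qz d z) = 0 := ae_all_iff.2 hΨz
  filter_upwards [hΦall, hΨall] with ω h1 h2
  constructor
  · rw [hU_eq ω]
    have hUorig : Uset Ψ F ω = ⋃ z : Fin d → ℤ, Uset Ψ F ω ∩ Qz d z := by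
      rw [← Set.inter_iUnion, iUnion_Qz, Set.inter_univ]
    rw [hUorig]
    refine le_antisymm ((measure_iUnion_le _).trans_eq ?_) (zero_le)
    simp [h1]
  · rw [hV_eq ω]
    have hUorig : Uset Φ F' ω = ⋃ z : Fin d → ℤ, Uset Φ F' ω ∩ Qz d z := by
      rw [← Set.inter_iUnion, iUnion_Qz, Set.inter_univ]
    rw [hUorig]
    refine le_antisymm ((measure_iUnion_le _).trans_eq ?_) (zero_le)
    simp [h2]

end main

end S4

end S4aux

/-- If the intensities are equal (positive and finite), then a.s. any
flow-adapted stable constrained density is balancing: the unexhausted sites are `Φ(ω)`-null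
and the unsated centers are `Ψ(ω)`-null. -/
theorem stmt4 {Ω : Type*} [MeasurableSpace Ω] {d : ℕ} (hd : 0 < d)
    (P : Measure Ω) [IsProbabilityMeasure P]
    (θ : Rd d → Ω → Ω) (hflow : IsMeasurableFlow θ) (hinv : IsFlowInvariant θ P)
    (herg : IsErgodicFlow θ P)
    (Φ Ψ : Ω → Measure (Rd d)) (hΦ : IsRandomMeasure Φ) (hΨ : IsRandomMeasure Ψ)
    (hΦa : FlowAdaptedMeasure θ Φ) (hΨa : FlowAdaptedMeasure θ Ψ)
    (lam : ℝ≥0∞) (hlam0 : 0 < lam) (hlamtop : lam < ⊤)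
    (hΦi : HasIntensity P Φ lam) (hΨi : HasIntensity P Ψ lam)
    (F : Ω → Rd d → Rd d → ℝ) (hF : FlowAdaptedKernel θ F)
    (hstab : ∀ᵐ ω ∂P, IsStableDensity (Φ ω) (Ψ ω) (F ω)) :
    ∀ᵐ ω ∂P, Φ ω {x | Unexhausted (Ψ ω) (F ω) x} = 0 ∧
      Ψ ω {ξ | Unsated (Φ ω) (F ω) ξ} = 0 :=
  S4.main hd P θ hflow hinv herg Φ Ψ hΦ hΨ hΦa hΨa lam hlam0 hlamtop hΦi hΨi F hF hstab
end
end

section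
/- Let Φ and Ψ be stationary random measures on a common probability space (Ω,𝓕,P) with ergodic P and positive finite intensities λ_Φ, λ_Ψ, and let F be a flow-adapted jointly measurable map such that P-almost surely F(ω,·,·) is a stable constrained density for (Φ(ω), Ψ(ω)). If λ_Φ < λ_Ψ, then P-almost surely the set of F(ω)-unexhausted sites has Φ(ω)-measure zero while the set of F(ω)-unsated centers has infinite Ψ(ω)-measure. Symmetrically, if λ_Φ > λ_Ψ, then P-almost surely the set of F(ω)-unsated centers has Ψ(ω)-measure zero while the set of F(ω)-unexhausted sites has infinite Φ(ω)-measure. -/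
open MeasureTheory Filter Metric Bornology
open scoped ENNReal NNReal Topology

noncomputable section

attribute [local instance] Classical.propDecidable

section Infra
open ProbabilityTheory
variable {Ω : Type*} [MeasurableSpace Ω] {d : ℕ}

theorem LocFin.sigmaFinite {μ : Measure (Rd d)} (h : LocFin μ) : SigmaFinite μ :=
  ⟨⟨⟨fun n => ball 0 n, fun _ => trivial, fun n => h _ isBounded_ball,
      Metric.iUnion_ball_nat 0⟩⟩⟩

/-- annulus -/
def ann (d : ℕ) (n : ℕ) : Set (Rd d) := ball 0 (n + 1) \ ball 0 n

lemma measurableSet_ann (d n : ℕ) : MeasurableSet (ann d n) :=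
  measurableSet_ball.diff measurableSet_ball

lemma mem_ann_iff {n : ℕ} {x : Rd d} : x ∈ ann d n ↔ (n : ℝ) ≤ ‖x‖ ∧ ‖x‖ < n + 1 := by
  simp [ann, Metric.mem_ball, dist_zero_right, and_comm, not_lt]

lemma iUnion_ann (d : ℕ) : ⋃ n, ann d n = Set.univ := by
  ext x
  simp only [Set.mem_iUnion, Set.mem_univ, iff_true]
  refine ⟨⌊‖x‖⌋₊, mem_ann_iff.2 ⟨Nat.floor_le (norm_nonneg x), ?_⟩⟩
  exact_mod_cast Nat.lt_floor_add_one ‖x‖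

lemma pairwise_disjoint_ann (d : ℕ) : Pairwise (Function.onFun Disjoint (ann d)) := by
  intro m n hmn
  rw [Function.onFun, Set.disjoint_left]
  intro x hxm hxn
  rw [mem_ann_iff] at hxm hxn
  rcases lt_or_gt_of_ne hmn with h | h
  · have : (m : ℝ) + 1 ≤ n := by exact_mod_cast h
    linarith [hxm.2, hxn.1]
  · have : (n : ℝ) + 1 ≤ m := by exact_mod_cast h
    linarith [hxm.1, hxn.2]

lemma measure_eq_tsum_ann (μ : Measure (Rd d)) {B : Set (Rd d)} (hB : MeasurableSet B) :
    μ B = ∑' n, μ (B ∩ ann d n) := by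
  rw [← measure_iUnion (fun m n hmn => ((pairwise_disjoint_ann d hmn).inter_left' B).inter_right' B)
      (fun n => hB.inter (measurableSet_ann d n))]
  · congr 1
    rw [← Set.inter_iUnion, iUnion_ann, Set.inter_univ]

/-- The kernel of a random measure. -/
def rmKer {Φ : Ω → Measure (Rd d)} (hΦ : IsRandomMeasure Φ) : Kernel Ω (Rd d) :=
  ⟨Φ, Measure.measurable_of_measurable_coe _ hΦ.1⟩

/-- Finite pieces of a random-measure kernel. -/
def rmPiece {Φ : Ω → Measure (Rd d)} (hΦ : IsRandomMeasure Φ) (p : ℕ × ℕ) :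
    Kernel Ω (Rd d) where
  toFun ω := if Φ ω (ann d p.1) ∈ Set.Ico (p.2 : ℝ≥0∞) ((p.2 : ℝ≥0∞) + 1) then
      (Φ ω).restrict (ann d p.1) else 0
  measurable' := by
    refine Measure.measurable_of_measurable_coe _ fun B hB => ?_
    have : (fun ω => (if Φ ω (ann d p.1) ∈ Set.Ico (p.2 : ℝ≥0∞) ((p.2 : ℝ≥0∞) + 1) then
        (Φ ω).restrict (ann d p.1) else 0) B)
        = fun ω => (if Φ ω (ann d p.1) ∈ Set.Ico (p.2 : ℝ≥0∞) ((p.2 : ℝ≥0∞) + 1) then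
          Φ ω (B ∩ ann d p.1) else 0) := by
      ext ω
      split_ifs with h
      · exact Measure.restrict_apply hB
      · rfl
    rw [this]
    refine Measurable.ite ?_ (hΦ.1 _ (hB.inter (measurableSet_ann d p.1))) measurable_const
    exact (hΦ.1 _ (measurableSet_ann d p.1)) measurableSet_Ico

instance rmPiece_finite {Φ : Ω → Measure (Rd d)} (hΦ : IsRandomMeasure Φ) (p : ℕ × ℕ) :
    IsFiniteKernel (rmPiece hΦ p) := by
  refine ⟨⟨(p.2 : ℝ≥0∞) + 1, ENNReal.add_lt_top.2 ⟨ENNReal.natCast_lt_top _, ENNReal.one_lt_top⟩,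
    fun ω => ?_⟩⟩
  show (if Φ ω (ann d p.1) ∈ Set.Ico (p.2 : ℝ≥0∞) ((p.2 : ℝ≥0∞) + 1) then
      (Φ ω).restrict (ann d p.1) else 0) Set.univ ≤ _
  split_ifs with h
  · rw [Measure.restrict_apply_univ]
    exact h.2.le
  · simp

theorem rmKer_isSFinite {Φ : Ω → Measure (Rd d)} (hΦ : IsRandomMeasure Φ) :
    IsSFiniteKernel (rmKer hΦ) := by
  have heq : rmKer hΦ = Kernel.sum (fun p : ℕ × ℕ => rmPiece hΦ p) := by
    ext ω B hB
    rw [Kernel.sum_apply' _ _ hB]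
    have h1 : (rmKer hΦ) ω B = Φ ω B := rfl
    rw [h1, measure_eq_tsum_ann _ hB, ENNReal.tsum_prod']
    congr 1
    ext n
    have hfin : Φ ω (ann d n) < ⊤ := hΦ.2 ω _ (isBounded_ball.subset Set.diff_subset)
    set x := Φ ω (ann d n) with hx
    have hr1 : (⌊x.toReal⌋₊ : ℝ≥0∞) ≤ x := by
      conv_rhs => rw [← ENNReal.ofReal_toReal hfin.ne]
      rw [← ENNReal.ofReal_natCast]
      exact ENNReal.ofReal_le_ofReal (Nat.floor_le ENNReal.toReal_nonneg)
    have hr2 : x < (⌊x.toReal⌋₊ : ℝ≥0∞) + 1 := by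
      conv_lhs => rw [← ENNReal.ofReal_toReal hfin.ne]
      calc ENNReal.ofReal x.toReal < ENNReal.ofReal ((⌊x.toReal⌋₊ : ℝ) + 1) :=
            (ENNReal.ofReal_lt_ofReal_iff (by positivity)).2 (Nat.lt_floor_add_one _)
        _ = (⌊x.toReal⌋₊ : ℝ≥0∞) + 1 := by
            rw [ENNReal.ofReal_add (by positivity) zero_le_one]
            simp [ENNReal.ofReal_natCast]
    have hm : x ∈ Set.Ico ((⌊x.toReal⌋₊ : ℝ≥0∞)) ((⌊x.toReal⌋₊ : ℝ≥0∞) + 1) := ⟨hr1, hr2⟩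
    rw [tsum_eq_single ⌊x.toReal⌋₊]
    · have : ((rmPiece hΦ (n, ⌊x.toReal⌋₊)) ω) B
          = (if x ∈ Set.Ico ((⌊x.toReal⌋₊ : ℝ≥0∞)) ((⌊x.toReal⌋₊ : ℝ≥0∞) + 1) then
            (Φ ω).restrict (ann d n) else 0) B := rfl
      rw [this, if_pos hm, Measure.restrict_apply hB]
    · intro m hm'
      show (if x ∈ Set.Ico ((m : ℝ≥0∞)) ((m : ℝ≥0∞) + 1) then (Φ ω).restrict (ann d n) else 0) B
          = 0
      rw [if_neg, Measure.coe_zero, Pi.zero_apply]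
      rintro ⟨h1', h2'⟩
      apply hm'
      have hA : (m : ℝ≥0∞) < (⌊x.toReal⌋₊ : ℝ≥0∞) + 1 := lt_of_le_of_lt h1' hm.2
      have hB' : (⌊x.toReal⌋₊ : ℝ≥0∞) < (m : ℝ≥0∞) + 1 := lt_of_le_of_lt hm.1 h2'
      have hA2 : m < ⌊x.toReal⌋₊ + 1 := by exact_mod_cast hA
      have hB2 : ⌊x.toReal⌋₊ < m + 1 := by exact_mod_cast hB'
      omega
  rw [heq]
  exact Kernel.isSFiniteKernel_sum (hκs := fun p => inferInstance)

theorem IsRandomMeasure.measurable_lintegral {Φ : Ω → Measure (Rd d)} (hΦ : IsRandomMeasure Φ)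
    {f : Ω → Rd d → ℝ≥0∞} (hf : Measurable (Function.uncurry f)) :
    Measurable fun ω => ∫⁻ x, f ω x ∂Φ ω := by
  haveI := rmKer_isSFinite hΦ
  exact Measurable.lintegral_kernel_prod_right (κ := rmKer hΦ) hf

theorem IsRandomMeasure.measurable_lintegral_prod {α : Type*} [MeasurableSpace α]
    {Φ : Ω → Measure (Rd d)} (hΦ : IsRandomMeasure Φ)
    {f : Ω × α → Rd d → ℝ≥0∞} (hf : Measurable (Function.uncurry f)) :
    Measurable fun p : Ω × α => ∫⁻ x, f p x ∂Φ p.1 := by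
  haveI := rmKer_isSFinite hΦ
  exact Measurable.lintegral_kernel_prod_right
    (κ := (rmKer hΦ).comap Prod.fst measurable_fst) hf

end Infra
section Shift
open ProbabilityTheory
variable {Ω : Type*} [MeasurableSpace Ω] {d : ℕ}

lemma measurable_theta {θ : Rd d → Ω → Ω} (hflow : IsMeasurableFlow θ) (s : Rd d) :
    Measurable (θ s) :=
  hflow.1.comp (measurable_const.prodMk measurable_id)

lemma lintegral_comp_flow {θ : Rd d → Ω → Ω} {P : Measure Ω}
    (hflow : IsMeasurableFlow θ) (hinv : IsFlowInvariant θ P) (s : Rd d)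
    {G : Ω → ℝ≥0∞} (hG : Measurable G) :
    ∫⁻ ω, G (θ s ω) ∂P = ∫⁻ ω, G ω ∂P := by
  rw [← lintegral_map hG (measurable_theta hflow s), hinv s]

lemma FlowAdaptedMeasure.map_eq {θ : Rd d → Ω → Ω} {Φ : Ω → Measure (Rd d)}
    (hΦa : FlowAdaptedMeasure θ Φ) (ω : Ω) (s : Rd d) :
    Φ (θ s ω) = Measure.map (fun x => x - s) (Φ ω) := by
  ext B hB
  rw [Measure.map_apply (by fun_prop : Measurable fun x : Rd d => x - s) hB, hΦa ω s B hB]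
  congr 1
  ext x
  constructor
  · rintro ⟨b, hb, rfl⟩
    simpa using hb
  · intro hx
    exact ⟨x - s, hx, by simp⟩

lemma lintegral_shift {θ : Rd d → Ω → Ω} {Φ : Ω → Measure (Rd d)}
    (hΦa : FlowAdaptedMeasure θ Φ) (ω : Ω) (s : Rd d) {g : Rd d → ℝ≥0∞}
    (hg : Measurable g) :
    ∫⁻ x, g x ∂Φ (θ s ω) = ∫⁻ x, g (x - s) ∂Φ ω := by
  rw [hΦa.map_eq ω s, lintegral_map hg (by fun_prop : Measurable fun x : Rd d => x - s)]

/-- The satedness integral. -/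
def Wfun (Φ : Ω → Measure (Rd d)) (F : Ω → Rd d → Rd d → ℝ) (ω : Ω) (ξ : Rd d) : ℝ≥0∞ :=
  ∫⁻ x, ENNReal.ofReal (F ω x ξ) ∂Φ ω

/-- The set of unsated centers. -/
def USet (Φ : Ω → Measure (Rd d)) (F : Ω → Rd d → Rd d → ℝ) (ω : Ω) : Set (Rd d) :=
  {ξ | Wfun Φ F ω ξ < 1}

lemma SSet_eq_unsated (Φ : Ω → Measure (Rd d)) (F : Ω → Rd d → Rd d → ℝ) (ω : Ω) :
    USet Φ F ω = {ξ | Unsated (Φ ω) (F ω) ξ} := rfl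

lemma meas_F_section {θ : Rd d → Ω → Ω} {F : Ω → Rd d → Rd d → ℝ}
    (hF : FlowAdaptedKernel θ F) (ω : Ω) (ξ : Rd d) :
    Measurable fun x => ENNReal.ofReal (F ω x ξ) :=
  ENNReal.measurable_ofReal.comp (hF.1.comp
    (measurable_const.prodMk (measurable_id.prodMk measurable_const)))

lemma meas_F_uncurry {θ : Rd d → Ω → Ω} {F : Ω → Rd d → Rd d → ℝ}
    (hF : FlowAdaptedKernel θ F) (ω : Ω) :
    Measurable (Function.uncurry fun x ξ => ENNReal.ofReal (F ω x ξ)) :=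
  ENNReal.measurable_ofReal.comp (hF.1.comp
    (measurable_const.prodMk (measurable_fst.prodMk measurable_snd)))

lemma meas_W {θ : Rd d → Ω → Ω} {Φ : Ω → Measure (Rd d)} {F : Ω → Rd d → Rd d → ℝ}
    (hΦ : IsRandomMeasure Φ) (hF : FlowAdaptedKernel θ F) :
    Measurable fun p : Ω × Rd d => Wfun Φ F p.1 p.2 := by
  refine hΦ.measurable_lintegral_prod (f := fun p x => ENNReal.ofReal (F p.1 x p.2)) ?_
  exact ENNReal.measurable_ofReal.comp (hF.1.comp
    ((measurable_fst.comp measurable_fst).prodMk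
      (measurable_snd.prodMk (measurable_snd.comp measurable_fst))))

lemma measurableSet_SSet {θ : Rd d → Ω → Ω} {Φ : Ω → Measure (Rd d)}
    {F : Ω → Rd d → Rd d → ℝ} (hΦ : IsRandomMeasure Φ) (hF : FlowAdaptedKernel θ F) (ω : Ω) :
    MeasurableSet (USet Φ F ω) :=
  measurable_prodMk_left (measurableSet_lt (meas_W hΦ hF) measurable_const)

lemma W_shift {θ : Rd d → Ω → Ω} {Φ : Ω → Measure (Rd d)} {F : Ω → Rd d → Rd d → ℝ}
    (hΦa : FlowAdaptedMeasure θ Φ) (hF : FlowAdaptedKernel θ F) (ω : Ω) (s : Rd d) (ξ : Rd d) :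
    Wfun Φ F (θ s ω) ξ = Wfun Φ F ω (ξ + s) := by
  unfold Wfun
  rw [lintegral_shift hΦa ω s (meas_F_section hF (θ s ω) ξ)]
  congr 1
  ext x
  rw [hF.2 ω s (x - s) ξ, sub_add_cancel]

lemma SSet_shift {θ : Rd d → Ω → Ω} {Φ : Ω → Measure (Rd d)} {F : Ω → Rd d → Rd d → ℝ}
    (hΦa : FlowAdaptedMeasure θ Φ) (hF : FlowAdaptedKernel θ F) (ω : Ω) (s : Rd d) :
    USet Φ F (θ s ω) = (fun b => b + s) ⁻¹' USet Φ F ω := by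
  ext ξ
  simp only [USet, Set.mem_setOf_eq, Set.mem_preimage, W_shift hΦa hF ω s ξ]

lemma image_add_preimage_add (s : Rd d) (A : Set (Rd d)) :
    (fun b => b + s) '' ((fun b => b + s) ⁻¹' A) = A :=
  Set.image_preimage_eq A fun x => ⟨x - s, by simp⟩

end Shift
section FSec2
variable {Ω : Type*} [MeasurableSpace Ω] {d : ℕ}
lemma meas_F_section2 {θ : Rd d → Ω → Ω} {F : Ω → Rd d → Rd d → ℝ}
    (hF : FlowAdaptedKernel θ F) (ω : Ω) (x : Rd d) :
    Measurable fun ξ => ENNReal.ofReal (F ω x ξ) :=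
  ENNReal.measurable_ofReal.comp (hF.1.comp
    (measurable_const.prodMk (measurable_const.prodMk measurable_id)))
end FSec2
section Cube
variable {d : ℕ}

/-- The half-open unit cube. -/
def cube (d : ℕ) : Set (Rd d) := {x | ∀ i, 0 ≤ x i ∧ x i < 1}

lemma measurable_coord (i : Fin d) : Measurable fun x : Rd d => x i :=
  (measurable_pi_apply i).comp (MeasurableEquiv.toLp 2 (Fin d → ℝ)).symm.measurable

lemma measurableSet_cube (d : ℕ) : MeasurableSet (cube d) := by
  have : cube d = ⋂ i, {x : Rd d | 0 ≤ x i ∧ x i < 1} := by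
    ext x; simp [cube, Set.mem_iInter]
  rw [this]
  exact MeasurableSet.iInter fun i =>
    ((measurableSet_le measurable_const (measurable_coord i)).inter
      (measurableSet_lt (measurable_coord i) measurable_const))

lemma volume_cube (d : ℕ) : volume (cube d) = 1 := by
  have hpre : cube d = (MeasurableEquiv.toLp 2 (Fin d → ℝ)).symm ⁻¹'
      (Set.univ.pi fun _ : Fin d => Set.Ico (0:ℝ) 1) := by
    ext x
    simp [cube, Set.mem_pi, Set.mem_Ico]
  rw [hpre, (EuclideanSpace.volume_preserving_symm_measurableEquiv_toLp (Fin d)).measure_preimage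
    ((MeasurableSet.univ_pi fun _ => measurableSet_Ico).nullMeasurableSet)]
  rw [volume_pi_pi]
  simp [Real.volume_Ico]

/-- Cube indicator. -/
def cubeInd (d : ℕ) : Rd d → ℝ≥0∞ := (cube d).indicator 1

lemma measurable_cubeInd (d : ℕ) : Measurable (cubeInd d) :=
  measurable_const.indicator (measurableSet_cube d)

lemma cubeInd_le_one (x : Rd d) : cubeInd d x ≤ 1 := by
  unfold cubeInd; rw [Set.indicator]; split_ifs <;> simp

lemma lintegral_cubeInd (μ : Measure (Rd d)) : ∫⁻ x, cubeInd d x ∂μ = μ (cube d) :=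
  lintegral_indicator_one (measurableSet_cube d)

/-- The lattice translation vector. -/
def latVec (d : ℕ) (z : Fin d → ℤ) : Rd d := WithLp.toLp 2 (fun i => (z i : ℝ))

lemma latVec_apply (z : Fin d → ℤ) (i : Fin d) : latVec d z i = (z i : ℝ) := rfl

lemma add_latVec_apply (x : Rd d) (z : Fin d → ℤ) (i : Fin d) :
    (x + latVec d z) i = x i + (z i : ℝ) := by simp [latVec]

lemma tsum_cubeInd_add (x : Rd d) : ∑' z : Fin d → ℤ, cubeInd d (x + latVec d z) = 1 := by
  classical
  set z₀ : Fin d → ℤ := fun i => -⌊x i⌋ with hz₀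
  have hmem : ∀ z : Fin d → ℤ, x + latVec d z ∈ cube d ↔ z = z₀ := by
    intro z
    constructor
    · intro h
      funext i
      have hi := h i
      rw [add_latVec_apply] at hi
      have : ⌊x i⌋ = -z i := by
        rw [Int.floor_eq_iff]
        constructor
        · push_cast; linarith [hi.1]
        · push_cast; linarith [hi.2]
      simp [hz₀, this]
    · rintro rfl
      intro i
      rw [add_latVec_apply]
      simp only [hz₀, Int.cast_neg]
      constructor
      · linarith [Int.floor_le (x i)]
      · linarith [Int.lt_floor_add_one (x i)]
  rw [tsum_eq_single z₀]
  · unfold cubeInd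
    rw [Set.indicator_of_mem ((hmem z₀).2 rfl)]
    rfl
  · intro z hz
    unfold cubeInd
    rw [Set.indicator_of_notMem]
    intro h
    exact hz ((hmem z).1 h)

lemma latVec_neg (z : Fin d → ℤ) : latVec d (-z) = -latVec d z := by
  ext i
  show (((-z) i : ℤ) : ℝ) = -((z i : ℝ))
  rw [Pi.neg_apply]
  push_cast
  ring

lemma tsum_cubeInd_sub (x : Rd d) : ∑' z : Fin d → ℤ, cubeInd d (x - latVec d z) = 1 := by
  rw [← (Equiv.neg (Fin d → ℤ)).tsum_eq (fun z => cubeInd d (x - latVec d z))]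
  have : ∀ z : Fin d → ℤ, cubeInd d (x - latVec d (Equiv.neg (Fin d → ℤ) z))
      = cubeInd d (x + latVec d z) := by
    intro z
    congr 1
    rw [show (Equiv.neg (Fin d → ℤ)) z = -z from rfl, latVec_neg]
    abel
  rw [tsum_congr this, tsum_cubeInd_add]

lemma norm_lt_of_mem_cube (hd : 0 < d) {y : Rd d} (hy : y ∈ cube d) : ‖y‖ < d := by
  have hd1 : (1 : ℝ) ≤ d := by exact_mod_cast hd
  have hS : ∑ i, ‖y i‖ ^ 2 < (d : ℝ) := by
    have hne : (Finset.univ : Finset (Fin d)).Nonempty := by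
      simpa [Finset.univ_nonempty_iff] using Fin.pos_iff_nonempty.1 hd
    calc ∑ i, ‖y i‖ ^ 2 < ∑ _i : Fin d, (1 : ℝ) := by
          apply Finset.sum_lt_sum_of_nonempty hne
          intro i _
          have h1 := (hy i).1
          have h2 := (hy i).2
          rw [Real.norm_eq_abs, abs_of_nonneg h1]
          nlinarith
      _ = (d : ℝ) := by simp
  rw [EuclideanSpace.norm_eq]
  calc Real.sqrt (∑ i, ‖y i‖ ^ 2) < Real.sqrt ((d : ℝ) ^ 2) := by
        apply Real.sqrt_lt_sqrt
        · positivity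
        · nlinarith
    _ = (d : ℝ) := Real.sqrt_sq (by positivity)
section Gfun
open ProbabilityTheory
variable {Ω : Type*} [MeasurableSpace Ω] {d : ℕ}

lemma image_add_ball (v : Rd d) (r : ℝ) :
    (fun b => b + v) '' ball (0 : Rd d) r = ball v r := by
  ext y
  simp only [Set.mem_image, mem_ball]
  constructor
  · rintro ⟨b, hb, rfl⟩
    calc dist (b + v) v = dist (b + v) (0 + v) := by rw [zero_add]
      _ = dist b 0 := dist_add_right b 0 v
      _ < r := hb
  · intro hy
    refine ⟨y - v, ?_, by simp⟩
    calc dist (y - v) 0 = ‖y - v - 0‖ := by rw [dist_eq_norm]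
      _ = ‖y - v‖ := by rw [sub_zero]
      _ = dist y v := (dist_eq_norm y v).symm
      _ < r := hy

lemma meas_measure_USet_inter {θ : Rd d → Ω → Ω} {Φ Ψ : Ω → Measure (Rd d)}
    {F : Ω → Rd d → Rd d → ℝ} (hΦ : IsRandomMeasure Φ) (hΨ : IsRandomMeasure Ψ)
    (hF : FlowAdaptedKernel θ F) {V : Set (Rd d)} (hV : MeasurableSet V) :
    Measurable fun ω => Ψ ω (USet Φ F ω ∩ V) := by
  set T : Set (Ω × Rd d) := {p | Wfun Φ F p.1 p.2 < 1 ∧ p.2 ∈ V} with hT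
  have hTm : MeasurableSet T :=
    (measurableSet_lt (meas_W hΦ hF) measurable_const).inter (measurable_snd hV)
  have hpt : ∀ ω, Ψ ω (USet Φ F ω ∩ V) = ∫⁻ ξ, T.indicator (1 : Ω × Rd d → ℝ≥0∞) (ω, ξ) ∂Ψ ω := by
    intro ω
    have hsec : MeasurableSet {ξ : Rd d | (ω, ξ) ∈ T} := measurable_prodMk_left hTm
    have heq : (fun ξ => T.indicator (1 : Ω × Rd d → ℝ≥0∞) (ω, ξ)) = fun ξ =>
        ({ξ : Rd d | (ω, ξ) ∈ T}).indicator (1 : Rd d → ℝ≥0∞) ξ := by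
      ext ξ
      by_cases h : (ω, ξ) ∈ T
      · rw [Set.indicator_of_mem h, Set.indicator_of_mem (show ξ ∈ {ξ | (ω, ξ) ∈ T} from h)]
        rfl
      · rw [Set.indicator_of_notMem h,
          Set.indicator_of_notMem (show ξ ∉ {ξ | (ω, ξ) ∈ T} from h)]
    rw [heq, lintegral_indicator_one hsec]
    rfl
  have hmeas : Measurable (Function.uncurry fun (ω : Ω) (ξ : Rd d) => T.indicator (1 : Ω × Rd d → ℝ≥0∞) (ω, ξ)) := by
    have heq2 : (Function.uncurry fun (ω : Ω) (ξ : Rd d) => T.indicator (1 : Ω × Rd d → ℝ≥0∞) (ω, ξ))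
        = T.indicator (1 : Ω × Rd d → ℝ≥0∞) := by
      ext p
      rfl
    rw [heq2]
    exact measurable_const.indicator hTm
  simp only [hpt]
  exact hΨ.measurable_lintegral hmeas

lemma USet_inter_ball_shift {θ : Rd d → Ω → Ω} {Φ Ψ : Ω → Measure (Rd d)}
    {F : Ω → Rd d → Rd d → ℝ}
    (hΦa : FlowAdaptedMeasure θ Φ) (hΨa : FlowAdaptedMeasure θ Ψ)
    (hΦ : IsRandomMeasure Φ) (hF : FlowAdaptedKernel θ F) (ω : Ω) (v : Rd d) (r : ℝ) :
    Ψ (θ v ω) (USet Φ F (θ v ω) ∩ ball 0 r) = Ψ ω (USet Φ F ω ∩ ball v r) := by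
  rw [SSet_shift hΦa hF ω v]
  rw [hΨa ω v _ (((measurable_id'.add_const v) (measurableSet_SSet hΦ hF ω)).inter
    measurableSet_ball)]
  rw [Set.image_inter (add_left_injective v), image_add_preimage_add, image_add_ball]

lemma USet_measure_shift {θ : Rd d → Ω → Ω} {Φ Ψ : Ω → Measure (Rd d)}
    {F : Ω → Rd d → Rd d → ℝ}
    (hΦa : FlowAdaptedMeasure θ Φ) (hΨa : FlowAdaptedMeasure θ Ψ)
    (hΦ : IsRandomMeasure Φ) (hF : FlowAdaptedKernel θ F) (ω : Ω) (v : Rd d) :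
    Ψ (θ v ω) (USet Φ F (θ v ω)) = Ψ ω (USet Φ F ω) := by
  rw [SSet_shift hΦa hF ω v]
  rw [hΨa ω v _ ((measurable_id'.add_const v) (measurableSet_SSet hΦ hF ω))]
  rw [image_add_preimage_add]

end Gfun
section MTP
open ProbabilityTheory Function
variable {Ω : Type*} [MeasurableSpace Ω] {d : ℕ}

lemma mtp (P : Measure Ω) [IsProbabilityMeasure P]
    (θ : Rd d → Ω → Ω) (hflow : IsMeasurableFlow θ) (hinv : IsFlowInvariant θ P)
    (Φ Ψ : Ω → Measure (Rd d)) (hΦ : IsRandomMeasure Φ) (hΨ : IsRandomMeasure Ψ)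
    (hΦa : FlowAdaptedMeasure θ Φ) (hΨa : FlowAdaptedMeasure θ Ψ)
    (F : Ω → Rd d → Rd d → ℝ) (hF : FlowAdaptedKernel θ F) :
    ∫⁻ ω, ∫⁻ x, cubeInd d x * ∫⁻ ξ, ENNReal.ofReal (F ω x ξ) ∂Ψ ω ∂Φ ω ∂P
      = ∫⁻ ω, ∫⁻ ξ, cubeInd d ξ * Wfun Φ F ω ξ ∂Ψ ω ∂P := by
  classical
  set K : (Fin d → ℤ) → Ω → Rd d → ℝ≥0∞ := fun z ω x =>
    ∫⁻ ξ, cubeInd d (ξ - latVec d z) * ENNReal.ofReal (F ω x ξ) ∂Ψ ω with hK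
  set K' : Ω → Rd d → ℝ≥0∞ := fun ω x =>
    ∫⁻ ξ, cubeInd d ξ * ENNReal.ofReal (F ω x ξ) ∂Ψ ω with hK'
  set G : (Fin d → ℤ) → Ω → ℝ≥0∞ := fun z ω =>
    ∫⁻ x, cubeInd d x * K z ω x ∂Φ ω with hG
  set G' : (Fin d → ℤ) → Ω → ℝ≥0∞ := fun z ω =>
    ∫⁻ x, cubeInd d (x + latVec d z) * K' ω x ∂Φ ω with hG'
  have hKm : ∀ z, Measurable fun p : Ω × Rd d => K z p.1 p.2 := by
    intro z
    refine hΨ.measurable_lintegral_prod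
      (f := fun p ξ => cubeInd d (ξ - latVec d z) * ENNReal.ofReal (F p.1 p.2 ξ)) ?_
    exact (((measurable_cubeInd d).comp (measurable_snd.sub measurable_const))).mul
      (ENNReal.measurable_ofReal.comp (hF.1.comp
        ((measurable_fst.comp measurable_fst).prodMk
          ((measurable_snd.comp measurable_fst).prodMk measurable_snd))))
  have hK'm : Measurable fun p : Ω × Rd d => K' p.1 p.2 := by
    refine hΨ.measurable_lintegral_prod
      (f := fun p ξ => cubeInd d ξ * ENNReal.ofReal (F p.1 p.2 ξ)) ?_
    exact ((measurable_cubeInd d).comp measurable_snd).mul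
      (ENNReal.measurable_ofReal.comp (hF.1.comp
        ((measurable_fst.comp measurable_fst).prodMk
          ((measurable_snd.comp measurable_fst).prodMk measurable_snd))))
  have hGm : ∀ z, Measurable (G z) := by
    intro z
    refine hΦ.measurable_lintegral (f := fun ω x => cubeInd d x * K z ω x) ?_
    exact ((measurable_cubeInd d).comp measurable_snd).mul (hKm z)
  have hG'm : ∀ z, Measurable (G' z) := by
    intro z
    refine hΦ.measurable_lintegral (f := fun ω x => cubeInd d (x + latVec d z) * K' ω x) ?_
    exact ((measurable_cubeInd d).comp (measurable_snd.add measurable_const)).mul hK'm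
  have step1 : ∀ z, ∫⁻ ω, G z ω ∂P = ∫⁻ ω, G' z ω ∂P := by
    intro z
    set v := latVec d z with hv
    have hpt : ∀ ω, G z (θ (-v) ω) = G' z ω := by
      intro ω
      have hKsec : Measurable fun x => K z (θ (-v) ω) x :=
        (hKm z).comp (measurable_const.prodMk measurable_id)
      have h2 : ∀ x : Rd d, K z (θ (-v) ω) (x + v) = K' ω x := by
        intro x
        have hmeas : Measurable fun ξ : Rd d =>
            cubeInd d (ξ - v) * ENNReal.ofReal (F (θ (-v) ω) (x + v) ξ) :=
          ((measurable_cubeInd d).comp (measurable_id'.sub measurable_const)).mul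
            (meas_F_section2 hF (θ (-v) ω) (x + v))
        have hcong : ∀ ξ : Rd d, cubeInd d (ξ - -v - v)
            * ENNReal.ofReal (F (θ (-v) ω) (x + v) (ξ - -v))
            = cubeInd d ξ * ENNReal.ofReal (F ω x ξ) := by
          intro ξ
          have e1 : ξ - -v - v = ξ := by abel
          have e2 : ξ - -v = ξ + v := by abel
          rw [e1, e2, hF.2 ω (-v) (x + v) (ξ + v), show x + v + -v = x by abel,
            show ξ + v + -v = ξ by abel]
        calc K z (θ (-v) ω) (x + v)
            = ∫⁻ ξ, cubeInd d (ξ - -v - v)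
                * ENNReal.ofReal (F (θ (-v) ω) (x + v) (ξ - -v)) ∂Ψ ω :=
              lintegral_shift hΨa ω (-v) hmeas
          _ = K' ω x := lintegral_congr hcong
      have h1 : G z (θ (-v) ω)
          = ∫⁻ x, cubeInd d (x - -v) * K z (θ (-v) ω) (x - -v) ∂Φ ω :=
        lintegral_shift hΦa ω (-v) ((measurable_cubeInd d).mul hKsec)
      rw [h1]
      refine lintegral_congr fun x => ?_
      have e3 : x - -v = x + v := by abel
      rw [e3, h2 x]
    calc ∫⁻ ω, G z ω ∂P = ∫⁻ ω, G z (θ (-v) ω) ∂P :=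
          (lintegral_comp_flow hflow hinv (-v) (hGm z)).symm
      _ = ∫⁻ ω, G' z ω ∂P := lintegral_congr fun ω => hpt ω
  have step2 : ∑' z, ∫⁻ ω, G z ω ∂P
      = ∫⁻ ω, ∫⁻ x, cubeInd d x * ∫⁻ ξ, ENNReal.ofReal (F ω x ξ) ∂Ψ ω ∂Φ ω ∂P := by
    rw [← lintegral_tsum fun z => (hGm z).aemeasurable]
    refine lintegral_congr fun ω => ?_
    have hsec : ∀ z, Measurable fun x => cubeInd d x * K z ω x := fun z =>
      (measurable_cubeInd d).mul ((hKm z).comp (measurable_const.prodMk measurable_id))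
    have hsec2 : ∀ (x : Rd d) (z : Fin d → ℤ), Measurable fun ξ =>
        cubeInd d (ξ - latVec d z) * ENNReal.ofReal (F ω x ξ) := fun x z =>
      ((measurable_cubeInd d).comp (measurable_id'.sub measurable_const)).mul
        (meas_F_section2 hF ω x)
    calc ∑' z, G z ω = ∫⁻ x, ∑' z, cubeInd d x * K z ω x ∂Φ ω :=
          (lintegral_tsum fun z => (hsec z).aemeasurable).symm
      _ = ∫⁻ x, cubeInd d x * ∫⁻ ξ, ENNReal.ofReal (F ω x ξ) ∂Ψ ω ∂Φ ω := by
          refine lintegral_congr fun x => ?_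
          rw [ENNReal.tsum_mul_left]
          congr 1
          calc ∑' z, K z ω x
              = ∫⁻ ξ, ∑' z, cubeInd d (ξ - latVec d z) * ENNReal.ofReal (F ω x ξ) ∂Ψ ω :=
                (lintegral_tsum fun z => (hsec2 x z).aemeasurable).symm
            _ = ∫⁻ ξ, ENNReal.ofReal (F ω x ξ) ∂Ψ ω := by
                refine lintegral_congr fun ξ => ?_
                rw [ENNReal.tsum_mul_right, tsum_cubeInd_sub, one_mul]
  have step3 : ∑' z, ∫⁻ ω, G' z ω ∂P = ∫⁻ ω, ∫⁻ x, K' ω x ∂Φ ω ∂P := by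
    rw [← lintegral_tsum fun z => (hG'm z).aemeasurable]
    refine lintegral_congr fun ω => ?_
    have hsec : ∀ z : Fin d → ℤ, Measurable fun x => cubeInd d (x + latVec d z) * K' ω x :=
      fun z => ((measurable_cubeInd d).comp (measurable_id'.add measurable_const)).mul
        (hK'm.comp (measurable_const.prodMk measurable_id))
    calc ∑' z, G' z ω = ∫⁻ x, ∑' z, cubeInd d (x + latVec d z) * K' ω x ∂Φ ω :=
          (lintegral_tsum fun z => (hsec z).aemeasurable).symm
      _ = ∫⁻ x, K' ω x ∂Φ ω := by
          refine lintegral_congr fun x => ?_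
          rw [ENNReal.tsum_mul_right, tsum_cubeInd_add, one_mul]
  have step4 : ∀ ω, ∫⁻ x, K' ω x ∂Φ ω = ∫⁻ ξ, cubeInd d ξ * Wfun Φ F ω ξ ∂Ψ ω := by
    intro ω
    haveI := (hΦ.2 ω).sigmaFinite
    haveI := (hΨ.2 ω).sigmaFinite
    calc ∫⁻ x, K' ω x ∂Φ ω
        = ∫⁻ ξ, ∫⁻ x, cubeInd d ξ * ENNReal.ofReal (F ω x ξ) ∂Φ ω ∂Ψ ω :=
          lintegral_lintegral_swap
            ((((measurable_cubeInd d).comp measurable_snd).mul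
              (meas_F_uncurry hF ω)).aemeasurable)
      _ = ∫⁻ ξ, cubeInd d ξ * Wfun Φ F ω ξ ∂Ψ ω := by
          refine lintegral_congr fun ξ => ?_
          exact lintegral_const_mul _ (meas_F_section hF ω ξ)
  calc ∫⁻ ω, ∫⁻ x, cubeInd d x * ∫⁻ ξ, ENNReal.ofReal (F ω x ξ) ∂Ψ ω ∂Φ ω ∂P
      = ∑' z, ∫⁻ ω, G z ω ∂P := step2.symm
    _ = ∑' z, ∫⁻ ω, G' z ω ∂P := tsum_congr step1
    _ = ∫⁻ ω, ∫⁻ x, K' ω x ∂Φ ω ∂P := step3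
    _ = ∫⁻ ω, ∫⁻ ξ, cubeInd d ξ * Wfun Φ F ω ξ ∂Ψ ω ∂P := lintegral_congr fun ω => step4 ω
end MTP
section Main
open ProbabilityTheory
variable {Ω : Type*} [MeasurableSpace Ω] {d : ℕ}

lemma mainlem (hd : 0 < d)
    (P : Measure Ω) [IsProbabilityMeasure P]
    (θ : Rd d → Ω → Ω) (hflow : IsMeasurableFlow θ) (hinv : IsFlowInvariant θ P)
    (herg : IsErgodicFlow θ P)
    (Φ Ψ : Ω → Measure (Rd d)) (hΦ : IsRandomMeasure Φ) (hΨ : IsRandomMeasure Ψ)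
    (hΦa : FlowAdaptedMeasure θ Φ) (hΨa : FlowAdaptedMeasure θ Ψ)
    (lamΦ lamΨ : ℝ≥0∞)
    (hΦi : HasIntensity P Φ lamΦ) (hΨi : HasIntensity P Ψ lamΨ)
    (F : Ω → Rd d → Rd d → ℝ) (hF : FlowAdaptedKernel θ F)
    (hstab : ∀ᵐ ω ∂P, IsStableDensity (Φ ω) (Ψ ω) (F ω))
    (hlt : lamΦ < lamΨ) :
    ∀ᵐ ω ∂P, Φ ω {x | Unexhausted (Ψ ω) (F ω) x} = 0 ∧
      Ψ ω {ξ | Unsated (Φ ω) (F ω) ξ} = ⊤ := by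
  classical
  set g : Ω → ℝ≥0∞ := fun ω => Ψ ω (USet Φ F ω) with hgdef
  have hgm : Measurable g := by
    have := meas_measure_USet_inter hΦ hΨ hF MeasurableSet.univ
    simpa [Set.inter_univ] using this
  have hginv : ∀ s ω, g (θ s ω) = g ω := fun s ω => USet_measure_shift hΦa hΨa hΦ hF ω s
  -- Step A : P {g = 0} = 0
  have hA0 : P {ω | g ω = 0} = 0 := by
    have measA : MeasurableSet {ω | g ω = 0} := hgm (measurableSet_singleton 0)
    have hAinv : ∀ s, θ s ⁻¹' {ω | g ω = 0} = {ω | g ω = 0} := by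
      intro s
      ext ω
      simp only [Set.mem_preimage, Set.mem_setOf_eq, hginv s ω]
    rcases herg _ measA hAinv with h | h
    · exact h
    · exfalso
      have hae : ∀ᵐ ω ∂P, g ω = 0 := by
        rw [ae_iff]
        have : {ω | ¬ g ω = 0} = {ω | g ω = 0}ᶜ := rfl
        rw [this, prob_compl_eq_zero_iff measA]
        exact h
      have hRHS_ge : lamΨ ≤ ∫⁻ ω, ∫⁻ ξ, cubeInd d ξ * Wfun Φ F ω ξ ∂Ψ ω ∂P := by
        have h1 : ∫⁻ ω, Ψ ω (cube d) ∂P = lamΨ := by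
          rw [hΨi _ (measurableSet_cube d), volume_cube, mul_one]
        rw [← h1]
        apply lintegral_mono_ae
        filter_upwards [hae] with ω hω
        have hWae : ∀ᵐ ξ ∂Ψ ω, 1 ≤ Wfun Φ F ω ξ := by
          rw [ae_iff]
          have : {ξ | ¬ 1 ≤ Wfun Φ F ω ξ} = USet Φ F ω := by
            ext ξ; simp [USet, not_le]
          rw [this]
          exact hω
        rw [← lintegral_cubeInd (Ψ ω)]
        apply lintegral_mono_ae
        filter_upwards [hWae] with ξ hξ
        calc cubeInd d ξ = cubeInd d ξ * 1 := (mul_one _).symm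
          _ ≤ cubeInd d ξ * Wfun Φ F ω ξ := mul_le_mul_right hξ _
      have hLHS_le :
          ∫⁻ ω, ∫⁻ x, cubeInd d x * ∫⁻ ξ, ENNReal.ofReal (F ω x ξ) ∂Ψ ω ∂Φ ω ∂P ≤ lamΦ := by
        have h1 : ∫⁻ ω, Φ ω (cube d) ∂P = lamΦ := by
          rw [hΦi _ (measurableSet_cube d), volume_cube, mul_one]
        rw [← h1]
        apply lintegral_mono_ae
        filter_upwards [hstab] with ω hω
        rw [← lintegral_cubeInd (Φ ω)]
        apply lintegral_mono
        intro x
        calc cubeInd d x * ∫⁻ ξ, ENNReal.ofReal (F ω x ξ) ∂Ψ ω ≤ cubeInd d x * 1 :=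
              mul_le_mul_right (hω.1.1.2.2.1 x) _
          _ = cubeInd d x := mul_one _
      have hmtp := mtp P θ hflow hinv Φ Ψ hΦ hΨ hΦa hΨa F hF
      exact absurd (le_trans hRHS_ge (le_trans (le_of_eq hmtp.symm) hLHS_le)) (not_le.2 hlt)
  -- Step B : P {g ≠ ⊤} = 0
  have measB : MeasurableSet {ω | g ω ≠ ⊤} := (hgm (measurableSet_singleton ⊤)).compl
  have hB0 : P {ω | g ω ≠ ⊤} = 0 := by
    have hBinv : ∀ s, θ s ⁻¹' {ω | g ω ≠ ⊤} = {ω | g ω ≠ ⊤} := by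
      intro s
      ext ω
      simp only [Set.mem_preimage, Set.mem_setOf_eq, hginv s ω]
    rcases herg _ measB hBinv with h | h
    · exact h
    · exfalso
      have hae : ∀ᵐ ω ∂P, g ω ≠ ⊤ := by
        rw [ae_iff]
        have heq : {ω | ¬ g ω ≠ ⊤} = {ω | g ω ≠ ⊤}ᶜ := rfl
        rw [heq, prob_compl_eq_zero_iff measB]
        exact h
      set ρ : ℝ := (d : ℝ) with hρ
      set e : Rd d := EuclideanSpace.single (⟨0, hd⟩ : Fin d) (1:ℝ) with he
      have hnorme : ‖e‖ = 1 := by rw [he, EuclideanSpace.norm_single, norm_one]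
      set Gb : Rd d → Ω → ℝ≥0∞ := fun s ω => min (Ψ ω (USet Φ F ω ∩ ball s ρ)) 1 with hGb
      have hGbm : ∀ s, Measurable (Gb s) := fun s =>
        (meas_measure_USet_inter hΦ hΨ hF measurableSet_ball).min measurable_const
      have hconst : ∀ s, ∫⁻ ω, Gb s ω ∂P = ∫⁻ ω, Gb 0 ω ∂P := by
        intro s
        rw [← lintegral_comp_flow hflow hinv s (hGbm 0)]
        refine lintegral_congr fun ω => ?_
        show min (Ψ ω (USet Φ F ω ∩ ball s ρ)) 1
            = min (Ψ (θ s ω) (USet Φ F (θ s ω) ∩ ball 0 ρ)) 1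
        rw [USet_inter_ball_shift hΦa hΨa hΦ hF ω s ρ]
      set sn : ℕ → Rd d := fun n => ((n : ℝ) + ρ) • e with hsn
      have hρ0 : (0:ℝ) ≤ ρ := by positivity
      have hsn_norm : ∀ n : ℕ, ‖sn n‖ = (n : ℝ) + ρ := by
        intro n
        rw [hsn]
        simp only [norm_smul, hnorme, mul_one, Real.norm_eq_abs]
        rw [abs_of_nonneg (by positivity)]
      have hball : ∀ (n : ℕ) (y : Rd d), y ∈ ball (sn n) ρ → (n : ℝ) ≤ ‖y‖ := by
        intro n y hy
        rw [mem_ball, dist_eq_norm] at hy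
        have h1 : ‖sn n‖ - ‖y‖ ≤ ‖y - sn n‖ := by
          have := norm_sub_norm_le (sn n) y
          rw [show ‖sn n - y‖ = ‖y - sn n‖ from norm_sub_rev _ _] at this
          linarith
        rw [hsn_norm n] at h1
        linarith
      have htend0 : ∀ᵐ ω ∂P, Filter.Tendsto (fun n => Gb (sn n) ω) atTop (𝓝 0) := by
        filter_upwards [hae] with ω hω
        have hfin : Ψ ω (USet Φ F ω) ≠ ⊤ := hω
        have hiInter : (⋂ n : ℕ, (USet Φ F ω ∩ (ball (0:Rd d) (n:ℝ))ᶜ)) = ∅ := by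
          rw [← Set.inter_iInter]
          rw [← Set.compl_iUnion]
          rw [Metric.iUnion_ball_nat (0 : Rd d)]
          simp
        have htm : Filter.Tendsto (fun n : ℕ => Ψ ω (USet Φ F ω ∩ (ball (0:Rd d) (n:ℝ))ᶜ))
            atTop (𝓝 0) := by
          have := tendsto_measure_iInter_atTop (μ := Ψ ω)
            (s := fun n : ℕ => USet Φ F ω ∩ (ball (0:Rd d) (n:ℝ))ᶜ)
            (fun n => ((measurableSet_SSet hΦ hF ω).inter measurableSet_ball.compl)
              |>.nullMeasurableSet)
            (fun m n hmn => Set.inter_subset_inter_right _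
              (Set.compl_subset_compl.2 (ball_subset_ball (by exact_mod_cast hmn))))
            ⟨0, ne_top_of_le_ne_top hfin (measure_mono Set.inter_subset_left)⟩
          rw [hiInter] at this
          simp only [measure_empty] at this
          exact this
        refine tendsto_of_tendsto_of_tendsto_of_le_of_le tendsto_const_nhds htm
          (fun n => zero_le) ?_
        intro n
        refine le_trans (min_le_left _ _) (measure_mono ?_)
        refine Set.inter_subset_inter_right _ ?_
        intro y hy
        simp only [Set.mem_compl_iff, mem_ball, dist_zero_right, not_lt]
        exact hball n y hy
      have hlim : Filter.Tendsto (fun n => ∫⁻ ω, Gb (sn n) ω ∂P) atTop (𝓝 0) := by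
        have h0 : (0:ℝ≥0∞) = ∫⁻ _ω, (0:ℝ≥0∞) ∂P := by simp
        rw [h0]
        refine tendsto_lintegral_of_dominated_convergence (bound := fun _ => 1)
          (fun n => hGbm (sn n)) (fun n => ae_of_all _ fun ω => min_le_right _ _) ?_ htend0
        simp
      have hGb0 : ∫⁻ ω, Gb 0 ω ∂P = 0 := by
        have hconst' : (fun n : ℕ => ∫⁻ ω, Gb (sn n) ω ∂P)
            = fun _ => ∫⁻ ω, Gb 0 ω ∂P := by
          funext n
          exact hconst (sn n)
        rw [hconst'] at hlim
        exact tendsto_nhds_unique tendsto_const_nhds hlim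
      have haeball : ∀ z : Fin d → ℤ,
          ∀ᵐ ω ∂P, Ψ ω (USet Φ F ω ∩ ball (latVec d z) ρ) = 0 := by
        intro z
        have hz : ∫⁻ ω, Gb (latVec d z) ω ∂P = 0 := (hconst _).trans hGb0
        have := (lintegral_eq_zero_iff (hGbm (latVec d z))).1 hz
        filter_upwards [this] with ω hω
        have hω' : min (Ψ ω (USet Φ F ω ∩ ball (latVec d z) ρ)) 1 = 0 := hω
        rcases le_total (Ψ ω (USet Φ F ω ∩ ball (latVec d z) ρ)) 1 with hle | hle
        · rwa [min_eq_left hle] at hω'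
        · rw [min_eq_right hle] at hω'
          exact absurd hω' one_ne_zero
      have haeg0 : ∀ᵐ ω ∂P, g ω = 0 := by
        have hall := ae_all_iff.2 haeball
        filter_upwards [hall] with ω hω
        have hcover : USet Φ F ω ⊆ ⋃ z : Fin d → ℤ, (USet Φ F ω ∩ ball (latVec d z) ρ) := by
          intro ξ hξ
          set z : Fin d → ℤ := fun i => ⌊ξ i⌋ with hz
          refine Set.mem_iUnion.2 ⟨z, hξ, ?_⟩
          rw [mem_ball, dist_eq_norm]
          refine lt_of_lt_of_le (norm_lt_of_mem_cube hd ?_) (le_refl _)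
          intro i
          constructor
          · show (0:ℝ) ≤ ξ i - (z i : ℝ)
            have := Int.floor_le (ξ i)
            simp only [hz]
            linarith
          · show ξ i - (z i : ℝ) < 1
            have := Int.lt_floor_add_one (ξ i)
            simp only [hz]
            linarith
        have hle : g ω ≤ ∑' z : Fin d → ℤ, Ψ ω (USet Φ F ω ∩ ball (latVec d z) ρ) :=
          le_trans (measure_mono hcover) (measure_iUnion_le _)
        have : (∑' z : Fin d → ℤ, Ψ ω (USet Φ F ω ∩ ball (latVec d z) ρ)) = 0 := by
          simp only [hω]
          exact tsum_zero
        rw [this] at hle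
        exact le_antisymm hle zero_le
      have hA1 : P {ω | g ω = 0} = 1 := by
        rw [← prob_compl_eq_zero_iff (show MeasurableSet {ω | g ω = 0} from hgm (measurableSet_singleton 0))]
        rw [ae_iff] at haeg0
        exact haeg0
      rw [hA0] at hA1
      exact zero_ne_one hA1
  -- Final combination
  have haeT : ∀ᵐ ω ∂P, g ω = ⊤ := by
    rw [ae_iff]
    exact hB0
  filter_upwards [hstab, haeT] with ω hs hT
  constructor
  · have hempty : {x | Unexhausted (Ψ ω) (F ω) x} = ∅ := by
      ext x₀
      simp only [Set.mem_setOf_eq, Set.mem_empty_iff_false, iff_false]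
      intro hx
      have hker : ∀ ξ₀ ∈ USet Φ F ω, (1:ℝ) ≤ F ω x₀ ξ₀ := by
        intro ξ₀ hξ₀
        by_contra hltf
        push_neg at hltf
        exact hs.2 ⟨x₀, ξ₀, ⟨hltf, Or.inl hx⟩, ⟨hltf, Or.inl hξ₀⟩⟩
      have htop : (⊤:ℝ≥0∞) ≤ ∫⁻ ξ, ENNReal.ofReal (F ω x₀ ξ) ∂Ψ ω := by
        calc (⊤:ℝ≥0∞) = g ω := hT.symm
          _ = ∫⁻ ξ, (USet Φ F ω).indicator (1 : Rd d → ℝ≥0∞) ξ ∂Ψ ω :=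
            (lintegral_indicator_one (measurableSet_SSet hΦ hF ω)).symm
          _ ≤ ∫⁻ ξ, ENNReal.ofReal (F ω x₀ ξ) ∂Ψ ω := by
            apply lintegral_mono
            intro ξ
            by_cases hξ : ξ ∈ USet Φ F ω
            · rw [Set.indicator_of_mem hξ]
              exact ENNReal.one_le_ofReal.2 (hker ξ hξ)
            · rw [Set.indicator_of_notMem hξ]
              exact zero_le
      have : ∫⁻ ξ, ENNReal.ofReal (F ω x₀ ξ) ∂Ψ ω = ⊤ := top_unique htop
      rw [Unexhausted, this] at hx
      exact absurd hx (by simp)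
    rw [hempty, measure_empty]
  · exact hT
end Main
section Swap
variable {Ω : Type*} [MeasurableSpace Ω] {d : ℕ}

lemma FlowAdaptedKernel.swapF {θ : Rd d → Ω → Ω} {F : Ω → Rd d → Rd d → ℝ}
    (hF : FlowAdaptedKernel θ F) : FlowAdaptedKernel θ (fun ω x ξ => F ω ξ x) := by
  constructor
  · exact hF.1.comp (measurable_fst.prodMk
      ((measurable_snd.comp measurable_snd).prodMk (measurable_fst.comp measurable_snd)))
  · intro ω s x ξ
    exact hF.2 ω s ξ x

lemma IsStableDensity.swapF {φ ψ : Measure (Rd d)} {f : Rd d → Rd d → ℝ}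
    (h : IsStableDensity φ ψ f) : IsStableDensity ψ φ (fun x ξ => f ξ x) := by
  obtain ⟨⟨⟨hm, h0, h3, h4⟩, hle⟩, hstab⟩ := h
  refine ⟨⟨⟨?_, fun x ξ => h0 ξ x, fun x => h4 x, fun ξ => h3 ξ⟩, fun x ξ => hle ξ x⟩, ?_⟩
  · exact hm.comp (measurable_snd.prodMk measurable_fst)
  · rintro ⟨x₀, ξ₀, hsd, hcd⟩
    apply hstab
    refine ⟨ξ₀, x₀, ?_, ?_⟩
    · -- SiteDesires ψ f ξ₀ x₀ from hcd
      obtain ⟨h1, h2⟩ := hcd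
      refine ⟨h1, ?_⟩
      rcases h2 with h2 | ⟨x₁, hx₁, hx₁'⟩
      · exact Or.inl h2
      · exact Or.inr ⟨x₁, by rwa [dist_comm ξ₀ x₀, dist_comm ξ₀ x₁], hx₁'⟩
    · -- CenterDesires φ f ξ₀ x₀ from hsd
      obtain ⟨h1, h2⟩ := hsd
      refine ⟨h1, ?_⟩
      rcases h2 with h2 | ⟨ξ₁, hξ₁, hξ₁'⟩
      · exact Or.inl h2
      · exact Or.inr ⟨ξ₁, by rwa [dist_comm ξ₀ x₀, dist_comm ξ₁ x₀], hξ₁'⟩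
end Swap

/-- The unequal-intensity cases of the stable-density theorem. -/
theorem stmt5 {Ω : Type*} [MeasurableSpace Ω] {d : ℕ} (hd : 0 < d)
    (P : Measure Ω) [IsProbabilityMeasure P]
    (θ : Rd d → Ω → Ω) (hflow : IsMeasurableFlow θ) (hinv : IsFlowInvariant θ P)
    (herg : IsErgodicFlow θ P)
    (Φ Ψ : Ω → Measure (Rd d)) (hΦ : IsRandomMeasure Φ) (hΨ : IsRandomMeasure Ψ)
    (hΦa : FlowAdaptedMeasure θ Φ) (hΨa : FlowAdaptedMeasure θ Ψ)
    (lamΦ lamΨ : ℝ≥0∞) (hlamΦ0 : 0 < lamΦ) (hlamΦtop : lamΦ < ⊤)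
    (hlamΨ0 : 0 < lamΨ) (hlamΨtop : lamΨ < ⊤)
    (hΦi : HasIntensity P Φ lamΦ) (hΨi : HasIntensity P Ψ lamΨ)
    (F : Ω → Rd d → Rd d → ℝ) (hF : FlowAdaptedKernel θ F)
    (hstab : ∀ᵐ ω ∂P, IsStableDensity (Φ ω) (Ψ ω) (F ω)) :
    (lamΦ < lamΨ → ∀ᵐ ω ∂P, Φ ω {x | Unexhausted (Ψ ω) (F ω) x} = 0 ∧
      Ψ ω {ξ | Unsated (Φ ω) (F ω) ξ} = ⊤) ∧
    (lamΨ < lamΦ → ∀ᵐ ω ∂P, Ψ ω {ξ | Unsated (Φ ω) (F ω) ξ} = 0 ∧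
      Φ ω {x | Unexhausted (Ψ ω) (F ω) x} = ⊤) := by

  constructor
  · intro h
    exact mainlem hd P θ hflow hinv herg Φ Ψ hΦ hΨ hΦa hΨa lamΦ lamΨ hΦi hΨi F hF hstab h
  · intro h
    have hstab' : ∀ᵐ ω ∂P, IsStableDensity (Ψ ω) (Φ ω) (fun x ξ => F ω ξ x) :=
      hstab.mono fun ω hω => hω.swapF
    have hmain := mainlem hd P θ hflow hinv herg Ψ Φ hΨ hΦ hΨa hΦa lamΨ lamΦ hΨi hΦi
      (fun ω x ξ => F ω ξ x) (hF.swapF) hstab' h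
    filter_upwards [hmain] with ω hω
    exact ⟨hω.1, hω.2⟩
end Cube
end
end

section
/- Let Ψ be a stationary random measure on (Ω,𝓕,P) with ergodic P and intensity λ ∈ (0,∞). Let F be a flow-adapted jointly measurable map such that P-almost surely F(ω,·,·) is a balancing density for the pair (λ·Leb, Ψ(ω)). Then for every measurable H : M → [0,∞] and every Borel set B ⊆ ℝ^d with 0 < Leb(B) < ∞, one has E[ ∫_{ℝ^d} H(θ_ξ Ψ(ω)) F(ω,0,ξ) Ψ(ω)(dξ) ] = (1/(λ·Leb(B))) · E[ ∫_B H(θ_s Ψ(ω)) Ψ(ω)(ds) ]. (The right-hand side is the Palm expectation of H evaluated at Ψ; thus shifting Ψ by a random point with conditional law F(ω,0,·)Ψ(ω) yields the Palm version of Ψ, i.e. a shift-coupling of Ψ and its Palm version.) -/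
open MeasureTheory Filter Metric Bornology
open scoped ENNReal NNReal Topology

noncomputable section

attribute [local instance] Classical.propDecidable

namespace Stmt6Aux

variable {Ω : Type*} [MeasurableSpace Ω] {d : ℕ}

lemma locFin_sigmaFinite {μ : Measure (Rd d)} (h : LocFin μ) : SigmaFinite μ := by
  refine ⟨⟨⟨fun n => Metric.closedBall 0 n, fun _ => trivial,
    fun n => h _ Metric.isBounded_closedBall, ?_⟩⟩⟩
  refine Set.eq_univ_of_forall fun x => Set.mem_iUnion.2 ?_
  obtain ⟨n, hn⟩ := exists_nat_ge (dist x 0)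
  exact ⟨n, Metric.mem_closedBall.2 hn⟩

def shellT (d : ℕ) (n : ℕ) : Set (Rd d) := (fun x : Rd d => ‖x‖) ⁻¹' Set.Ico (n : ℝ) (n + 1)

lemma shellT_meas (n : ℕ) : MeasurableSet (shellT d n) :=
  measurable_norm measurableSet_Ico

lemma shellT_bounded (n : ℕ) : IsBounded (shellT d n) := by
  refine (Metric.isBounded_closedBall (x := (0 : Rd d)) (r := n + 1)).subset fun x hx => ?_
  have : ‖x‖ < n + 1 := hx.2
  simpa [Metric.mem_closedBall] using this.le

lemma shellT_union : ⋃ n, shellT d n = Set.univ := by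
  refine Set.eq_univ_of_forall fun x => Set.mem_iUnion.2 ?_
  exact ⟨⌊‖x‖⌋₊, ⟨Nat.floor_le (norm_nonneg x), Nat.lt_floor_add_one _⟩⟩

lemma shellT_disj : Pairwise (Function.onFun Disjoint (shellT d)) := by
  intro n m hnm
  refine Set.disjoint_left.2 fun x hx hx' => hnm ?_
  have h1 : n = ⌊‖x‖⌋₊ := by
    symm; rw [Nat.floor_eq_iff (le_trans (Nat.cast_nonneg n) hx.1)]
    exact ⟨hx.1, hx.2⟩
  have h2 : m = ⌊‖x‖⌋₊ := by
    symm; rw [Nat.floor_eq_iff (le_trans (Nat.cast_nonneg m) hx'.1)]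
    exact ⟨hx'.1, hx'.2⟩
  rw [h1, h2]

lemma measurable_lintegral_psi (Ψ : Ω → Measure (Rd d))
    (hm : ∀ B : Set (Rd d), MeasurableSet B → Measurable fun ω => Ψ ω B)
    (hloc : ∀ ω, LocFin (Ψ ω))
    {G : Ω × Rd d → ℝ≥0∞} (hG : Measurable G) :
    Measurable fun ω => ∫⁻ ξ, G (ω, ξ) ∂(Ψ ω) := by
  classical
  let κ : ProbabilityTheory.Kernel Ω (Rd d) :=
    ⟨Ψ, Measure.measurable_of_measurable_coe _ hm⟩
  have hκapp : ∀ ω, κ ω = Ψ ω := fun _ => rfl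
  -- the pieces
  have hAmeas : ∀ n m : ℕ, MeasurableSet {ω | (m : ℝ≥0∞) ≤ Ψ ω (shellT d n) ∧
      Ψ ω (shellT d n) < (m : ℝ≥0∞) + 1} := by
    intro n m
    have : {ω | (m : ℝ≥0∞) ≤ Ψ ω (shellT d n) ∧ Ψ ω (shellT d n) < (m : ℝ≥0∞) + 1}
        = (fun ω => Ψ ω (shellT d n)) ⁻¹' Set.Ico (m : ℝ≥0∞) ((m : ℝ≥0∞) + 1) := rfl
    rw [this]
    exact hm _ (shellT_meas n) measurableSet_Ico
  let κp : ℕ × ℕ → ProbabilityTheory.Kernel Ω (Rd d) := fun p =>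
    ProbabilityTheory.Kernel.piecewise (hAmeas p.1 p.2) (κ.restrict (shellT_meas p.1)) 0
  have hfin : ∀ p, ProbabilityTheory.IsFiniteKernel (κp p) := by
    intro p
    refine ⟨⟨(p.2 : ℝ≥0∞) + 1, by simp [ENNReal.add_lt_top], fun ω => ?_⟩⟩
    rw [ProbabilityTheory.Kernel.piecewise_apply']
    split_ifs with h
    · rw [ProbabilityTheory.Kernel.restrict_apply' _ _ _ MeasurableSet.univ]
      simpa [hκapp] using h.2.le
    · simp
  have hsum : κ = ProbabilityTheory.Kernel.sum κp := by
    ext ω B hB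
    rw [ProbabilityTheory.Kernel.sum_apply' _ _ hB]
    rw [ENNReal.tsum_prod (f := fun n m => κp (n, m) ω B)]
    have hshell : ∀ n, ∑' m : ℕ, κp (n, m) ω B = Ψ ω (B ∩ shellT d n) := by
      intro n
      have hc : Ψ ω (shellT d n) ≠ ⊤ := (hloc ω _ (shellT_bounded n)).ne
      set c : ℝ≥0∞ := Ψ ω (shellT d n) with hcdef
      set m₀ : ℕ := ⌊c.toReal⌋₊ with hm₀
      have hle : (m₀ : ℝ≥0∞) ≤ c := by
        rw [← ENNReal.ofReal_toReal hc, ← ENNReal.ofReal_natCast m₀]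
        exact ENNReal.ofReal_le_ofReal (Nat.floor_le ENNReal.toReal_nonneg)
      have hlt : c < (m₀ : ℝ≥0∞) + 1 := by
        rw [← ENNReal.ofReal_toReal hc]
        have h1 : c.toReal < (m₀ : ℝ) + 1 := Nat.lt_floor_add_one _
        calc ENNReal.ofReal c.toReal < ENNReal.ofReal ((m₀ : ℝ) + 1) :=
              (ENNReal.ofReal_lt_ofReal_iff (by positivity)).2 h1
          _ = (m₀ : ℝ≥0∞) + 1 := by
              rw [ENNReal.ofReal_add (Nat.cast_nonneg m₀) zero_le_one,
                ENNReal.ofReal_natCast, ENNReal.ofReal_one]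
      have happ : ∀ m : ℕ, κp (n, m) ω B =
          if (m : ℝ≥0∞) ≤ c ∧ c < (m : ℝ≥0∞) + 1 then Ψ ω (B ∩ shellT d n) else 0 := by
        intro m
        rw [show κp (n, m) ω B = _ from ProbabilityTheory.Kernel.piecewise_apply' _ _]
        split_ifs with h1 h2 h3
        · rw [ProbabilityTheory.Kernel.restrict_apply' _ _ _ hB]; rfl
        · exact absurd h1 h2
        · exact absurd h3 h1
        · simp
      rw [tsum_eq_single m₀ ?uniq]
      · rw [happ m₀, if_pos ⟨hle, hlt⟩]
      case uniq =>
        intro m hm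
        rw [happ m, if_neg]
        rintro ⟨h1, h2⟩
        rcases lt_trichotomy m m₀ with h | h | h
        · have : (m : ℝ≥0∞) + 1 ≤ (m₀ : ℝ≥0∞) := by
            have : ((m + 1 : ℕ) : ℝ≥0∞) ≤ (m₀ : ℝ≥0∞) := Nat.cast_le.2 h
            simpa using this
          exact absurd (lt_of_lt_of_le h2 (this.trans hle)) (lt_irrefl _)
        · exact hm h
        · have : (m₀ : ℝ≥0∞) + 1 ≤ (m : ℝ≥0∞) := by
            have : ((m₀ + 1 : ℕ) : ℝ≥0∞) ≤ (m : ℝ≥0∞) := Nat.cast_le.2 h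
            simpa using this
          exact absurd (lt_of_lt_of_le hlt (this.trans h1)) (lt_irrefl _)
    calc κ ω B = Ψ ω B := by rw [hκapp]
      _ = Ψ ω (⋃ n, B ∩ shellT d n) := by
          rw [← Set.inter_iUnion, shellT_union, Set.inter_univ]
      _ = ∑' n, Ψ ω (B ∩ shellT d n) := by
          refine measure_iUnion ?_ fun n => hB.inter (shellT_meas n)
          exact fun n m hnm => (shellT_disj hnm).mono Set.inter_subset_right Set.inter_subset_right
      _ = ∑' n, ∑' m, κp (n, m) ω B := by
          exact tsum_congr fun n => (hshell n).symm
  haveI : ProbabilityTheory.IsSFiniteKernel κ := by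
    rw [hsum]
    haveI := hfin
    exact ProbabilityTheory.Kernel.isSFiniteKernel_sum
  exact hG.lintegral_kernel_prod_right' (κ := κ)

end Stmt6Aux

-- ===== main theorem scaffold =====
theorem Stmt6Aux.stmt6_main {Ω : Type*} [MeasurableSpace Ω] {d : ℕ}
    (P : Measure Ω) [IsProbabilityMeasure P]
    (θ : Rd d → Ω → Ω)
    (mθ : Measurable (fun p : Rd d × Ω => θ p.1 p.2))
    (hθc : ∀ s t : Rd d, θ s ∘ θ t = θ (s + t))
    (hinv : ∀ s, Measure.map (θ s) P = P)
    (Ψ : Ω → Measure (Rd d))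
    (hΨm : ∀ B : Set (Rd d), MeasurableSet B → Measurable fun ω => Ψ ω B)
    (hΨloc : ∀ ω, LocFin (Ψ ω))
    (hΨa : ∀ ω s (B : Set (Rd d)), MeasurableSet B → Ψ (θ s ω) B = Ψ ω ((fun b => b + s) '' B))
    (lam : ℝ≥0∞) (hlam0 : 0 < lam) (hlamtop : lam < ⊤)
    (F : Ω → Rd d → Rd d → ℝ)
    (mF : Measurable (fun p : Ω × Rd d × Rd d => F p.1 p.2.1 p.2.2))
    (hFad : ∀ ω s x ξ, F (θ s ω) x ξ = F ω (x + s) (ξ + s))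
    (hbal2 : ∀ᵐ ω ∂P, ∀ᵐ ξ ∂(Ψ ω), ∫⁻ x, ENNReal.ofReal (F ω x ξ) ∂(lam • (volume : Measure (Rd d))) = 1)
    (H : Measure (Rd d) → ℝ≥0∞) (hH : Measurable H)
    (B : Set (Rd d)) (hB : MeasurableSet B) (hB0 : 0 < volume B) (hBtop : volume B < ⊤) :
    ∫⁻ ω, ∫⁻ ξ, H (Ψ (θ ξ ω)) * ENNReal.ofReal (F ω 0 ξ) ∂(Ψ ω) ∂P
      = (lam * volume B)⁻¹ * ∫⁻ ω, ∫⁻ s in B, H (Ψ (θ s ω)) ∂(Ψ ω) ∂P := by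
  classical
  have mθs : ∀ s : Rd d, Measurable (θ s) := fun s =>
    mθ.comp (measurable_const.prodMk measurable_id)
  have mΨ : Measurable Ψ := Measure.measurable_of_measurable_coe _ hΨm
  have mθω : ∀ ω, Measurable fun ξ : Rd d => θ ξ ω := fun ω =>
    mθ.comp (measurable_id.prodMk measurable_const)
  have mHω : ∀ ω, Measurable fun ξ : Rd d => H (Ψ (θ ξ ω)) := fun ω =>
    hH.comp (mΨ.comp (mθω ω))
  -- indicator function
  set bi : Rd d → ℝ≥0∞ := fun ξ => if ξ ∈ B then 1 else 0 with hbi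
  have mbi : Measurable bi := Measurable.ite (by simpa using hB) measurable_const measurable_const
  -- measure shift under the flow by -x
  have hmapx : ∀ (x : Rd d) (ω : Ω), Ψ (θ (-x) ω) = Measure.map (fun y => y + x) (Ψ ω) := by
    intro x ω
    refine Measure.ext fun s hs => ?_
    rw [Measure.map_apply (measurable_add_const x) hs, hΨa ω (-x) s hs]
    congr 1
    ext y
    simp only [Set.mem_image, Set.mem_preimage]
    constructor
    · rintro ⟨b, hb, rfl⟩
      simpa [add_assoc] using hb
    · intro hy
      exact ⟨y + x, hy, by abel⟩
  -- joint measurability packages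
  have M1 : Measurable fun q : (Ω × Rd d) × Rd d =>
      bi q.2 * H (Ψ (θ q.2 q.1.1)) * ENNReal.ofReal (F q.1.1 q.1.2 q.2) :=
    ((mbi.comp measurable_snd).mul
      (hH.comp (mΨ.comp (mθ.comp (measurable_snd.prodMk
        (measurable_fst.comp measurable_fst)))))).mul
      (ENNReal.measurable_ofReal.comp (mF.comp ((measurable_fst.comp measurable_fst).prodMk
        ((measurable_snd.comp measurable_fst).prodMk measurable_snd))))
  have M2 : Measurable fun q : (Ω × Rd d) × Rd d =>
      bi (q.2 + q.1.2) * H (Ψ (θ q.2 q.1.1)) * ENNReal.ofReal (F q.1.1 0 q.2) :=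
    ((mbi.comp (measurable_snd.add (measurable_snd.comp measurable_fst))).mul
      (hH.comp (mΨ.comp (mθ.comp (measurable_snd.prodMk
        (measurable_fst.comp measurable_fst)))))).mul
      (ENNReal.measurable_ofReal.comp (mF.comp ((measurable_fst.comp measurable_fst).prodMk
        (measurable_const.prodMk measurable_snd))))
  have hu1 : Measurable (Function.uncurry fun (ω : Ω) (x : Rd d) =>
      ∫⁻ ξ, bi ξ * H (Ψ (θ ξ ω)) * ENNReal.ofReal (F ω x ξ) ∂Ψ ω) :=
    Stmt6Aux.measurable_lintegral_psi (fun p : Ω × Rd d => Ψ p.1)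
      (fun B hB => (hΨm B hB).comp measurable_fst) (fun p => hΨloc p.1) M1
  have hu2 : Measurable (Function.uncurry fun (ω : Ω) (x : Rd d) =>
      ∫⁻ ξ, bi (ξ + x) * H (Ψ (θ ξ ω)) * ENNReal.ofReal (F ω 0 ξ) ∂Ψ ω) :=
    Stmt6Aux.measurable_lintegral_psi (fun p : Ω × Rd d => Ψ p.1)
      (fun B hB => (hΨm B hB).comp measurable_fst) (fun p => hΨloc p.1) M2
  have hgx : ∀ x : Rd d, Measurable fun ω =>
      ∫⁻ ξ, bi ξ * H (Ψ (θ ξ ω)) * ENNReal.ofReal (F ω x ξ) ∂Ψ ω := fun x =>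
    hu1.comp (measurable_id.prodMk measurable_const)
  have hintm : ∀ (ω : Ω) (x : Rd d), Measurable fun ξ =>
      bi ξ * H (Ψ (θ ξ ω)) * ENNReal.ofReal (F ω x ξ) := fun ω x =>
    ((mbi.mul (mHω ω)).mul (ENNReal.measurable_ofReal.comp
      (mF.comp (measurable_const.prodMk (measurable_const.prodMk measurable_id)))))
  -- Step F: shifting the probability space by -x
  have stepF : ∀ x : Rd d,
      ∫⁻ ω, ∫⁻ ξ, bi ξ * H (Ψ (θ ξ ω)) * ENNReal.ofReal (F ω x ξ) ∂Ψ ω ∂P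
      = ∫⁻ ω, ∫⁻ ξ, bi (ξ + x) * H (Ψ (θ ξ ω)) * ENNReal.ofReal (F ω 0 ξ) ∂Ψ ω ∂P := by
    intro x
    conv_lhs => rw [← hinv (-x)]
    rw [lintegral_map (hgx x) (mθs (-x))]
    refine lintegral_congr fun ω => ?_
    rw [hmapx x ω, lintegral_map (hintm (θ (-x) ω) x) (measurable_add_const x)]
    refine lintegral_congr fun y => ?_
    have h1 : θ (y + x) (θ (-x) ω) = θ y ω := by
      have h := congrFun (hθc (y + x) (-x)) ω
      simpa using h
    have h2 : F (θ (-x) ω) x (y + x) = F ω 0 y := by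
      have h := hFad ω (-x) x (y + x)
      simpa using h
    rw [h1, h2]
  -- the translated indicator integral
  have hxint : ∀ ξ : Rd d, ∫⁻ x, bi (ξ + x) ∂(volume : Measure (Rd d)) = volume B := by
    intro ξ
    have hrw : (fun x : Rd d => bi (ξ + x))
        = ((fun x : Rd d => ξ + x) ⁻¹' B).indicator fun _ => (1 : ℝ≥0∞) := by
      funext x
      simp [hbi, Set.indicator_apply, Set.mem_preimage]
    have hpre : MeasurableSet ((fun x : Rd d => ξ + x) ⁻¹' B) :=
      (measurable_const.add measurable_id) hB
    rw [hrw, lintegral_indicator_const hpre 1, one_mul]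
    exact measure_preimage_add volume ξ B
  -- a.e. rewrite of the inner integral using the balancing property
  have hae : ∀ᵐ ω ∂P, ∫⁻ s in B, H (Ψ (θ s ω)) ∂Ψ ω
      = lam * ∫⁻ x, ∫⁻ ξ, bi ξ * H (Ψ (θ ξ ω)) * ENNReal.ofReal (F ω x ξ)
          ∂Ψ ω ∂(volume : Measure (Rd d)) := by
    filter_upwards [hbal2] with ω hω
    haveI : SigmaFinite (Ψ ω) := Stmt6Aux.locFin_sigmaFinite (hΨloc ω)
    have hbalω : ∀ᵐ ξ ∂Ψ ω,
        lam * ∫⁻ x, ENNReal.ofReal (F ω x ξ) ∂(volume : Measure (Rd d)) = 1 := by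
      filter_upwards [hω] with ξ hξ
      rw [← smul_eq_mul, ← lintegral_smul_measure]
      exact hξ
    have hFm : ∀ ξ : Rd d, Measurable fun x => ENNReal.ofReal (F ω x ξ) := fun ξ =>
      ENNReal.measurable_ofReal.comp
        (mF.comp (measurable_const.prodMk (measurable_id.prodMk measurable_const)))
    have hswap : Measurable (Function.uncurry fun ξ x : Rd d =>
        bi ξ * H (Ψ (θ ξ ω)) * ENNReal.ofReal (F ω x ξ)) :=
      ((mbi.comp measurable_fst).mul ((mHω ω).comp measurable_fst)).mul
        (ENNReal.measurable_ofReal.comp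
          (mF.comp (measurable_const.prodMk (measurable_snd.prodMk measurable_fst))))
    calc ∫⁻ s in B, H (Ψ (θ s ω)) ∂Ψ ω
        = ∫⁻ ξ, bi ξ * H (Ψ (θ ξ ω)) ∂Ψ ω := by
          rw [← lintegral_indicator hB]
          refine lintegral_congr fun ξ => ?_
          simp only [Set.indicator_apply, hbi]
          split_ifs <;> simp
      _ = ∫⁻ ξ, bi ξ * H (Ψ (θ ξ ω))
            * (lam * ∫⁻ x, ENNReal.ofReal (F ω x ξ) ∂(volume : Measure (Rd d))) ∂Ψ ω := by
          refine lintegral_congr_ae (hbalω.mono fun ξ hξ => ?_)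
          simp only []
          rw [hξ, mul_one]
      _ = ∫⁻ ξ, lam * ∫⁻ x, bi ξ * H (Ψ (θ ξ ω)) * ENNReal.ofReal (F ω x ξ)
            ∂(volume : Measure (Rd d)) ∂Ψ ω := by
          refine lintegral_congr fun ξ => ?_
          rw [lintegral_const_mul (bi ξ * H (Ψ (θ ξ ω))) (hFm ξ)]
          ring
      _ = lam * ∫⁻ ξ, ∫⁻ x, bi ξ * H (Ψ (θ ξ ω)) * ENNReal.ofReal (F ω x ξ)
            ∂(volume : Measure (Rd d)) ∂Ψ ω := lintegral_const_mul' lam _ hlamtop.ne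
      _ = lam * ∫⁻ x, ∫⁻ ξ, bi ξ * H (Ψ (θ ξ ω)) * ENNReal.ofReal (F ω x ξ)
            ∂Ψ ω ∂(volume : Measure (Rd d)) := by
          congr 1
          exact lintegral_lintegral_swap hswap.aemeasurable
  -- the key identity
  have key : ∫⁻ ω, ∫⁻ s in B, H (Ψ (θ s ω)) ∂Ψ ω ∂P
      = (lam * volume B) * ∫⁻ ω, ∫⁻ ξ, H (Ψ (θ ξ ω)) * ENNReal.ofReal (F ω 0 ξ) ∂Ψ ω ∂P := by
    calc ∫⁻ ω, ∫⁻ s in B, H (Ψ (θ s ω)) ∂Ψ ω ∂P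
        = ∫⁻ ω, lam * ∫⁻ x, ∫⁻ ξ, bi ξ * H (Ψ (θ ξ ω)) * ENNReal.ofReal (F ω x ξ)
            ∂Ψ ω ∂(volume : Measure (Rd d)) ∂P := lintegral_congr_ae hae
      _ = lam * ∫⁻ ω, ∫⁻ x, ∫⁻ ξ, bi ξ * H (Ψ (θ ξ ω)) * ENNReal.ofReal (F ω x ξ)
            ∂Ψ ω ∂(volume : Measure (Rd d)) ∂P := lintegral_const_mul' lam _ hlamtop.ne
      _ = lam * ∫⁻ x, ∫⁻ ω, ∫⁻ ξ, bi ξ * H (Ψ (θ ξ ω)) * ENNReal.ofReal (F ω x ξ)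
            ∂Ψ ω ∂P ∂(volume : Measure (Rd d)) := by
          congr 1
          exact lintegral_lintegral_swap hu1.aemeasurable
      _ = lam * ∫⁻ x, ∫⁻ ω, ∫⁻ ξ, bi (ξ + x) * H (Ψ (θ ξ ω)) * ENNReal.ofReal (F ω 0 ξ)
            ∂Ψ ω ∂P ∂(volume : Measure (Rd d)) := by
          congr 1
          exact lintegral_congr fun x => stepF x
      _ = lam * ∫⁻ ω, ∫⁻ x, ∫⁻ ξ, bi (ξ + x) * H (Ψ (θ ξ ω)) * ENNReal.ofReal (F ω 0 ξ)
            ∂Ψ ω ∂(volume : Measure (Rd d)) ∂P := by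
          congr 1
          exact (lintegral_lintegral_swap hu2.aemeasurable).symm
      _ = lam * ∫⁻ ω, ∫⁻ ξ, H (Ψ (θ ξ ω)) * ENNReal.ofReal (F ω 0 ξ) * volume B ∂Ψ ω ∂P := by
          congr 1
          refine lintegral_congr fun ω => ?_
          haveI : SigmaFinite (Ψ ω) := Stmt6Aux.locFin_sigmaFinite (hΨloc ω)
          have hswap2 : Measurable (Function.uncurry fun x ξ : Rd d =>
              bi (ξ + x) * H (Ψ (θ ξ ω)) * ENNReal.ofReal (F ω 0 ξ)) :=
            ((mbi.comp (measurable_snd.add measurable_fst)).mul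
              ((mHω ω).comp measurable_snd)).mul
              (ENNReal.measurable_ofReal.comp (mF.comp (measurable_const.prodMk
                (measurable_const.prodMk measurable_snd))))
          rw [lintegral_lintegral_swap hswap2.aemeasurable]
          refine lintegral_congr fun ξ => ?_
          have hc : Measurable fun x : Rd d => bi (ξ + x) :=
            mbi.comp (measurable_const.add measurable_id)
          calc ∫⁻ x, bi (ξ + x) * H (Ψ (θ ξ ω)) * ENNReal.ofReal (F ω 0 ξ)
                ∂(volume : Measure (Rd d))
              = ∫⁻ x, (H (Ψ (θ ξ ω)) * ENNReal.ofReal (F ω 0 ξ)) * bi (ξ + x)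
                ∂(volume : Measure (Rd d)) := lintegral_congr fun x => by ring
            _ = (H (Ψ (θ ξ ω)) * ENNReal.ofReal (F ω 0 ξ))
                * ∫⁻ x, bi (ξ + x) ∂(volume : Measure (Rd d)) := lintegral_const_mul _ hc
            _ = H (Ψ (θ ξ ω)) * ENNReal.ofReal (F ω 0 ξ) * volume B := by rw [hxint ξ]
      _ = lam * ((∫⁻ ω, ∫⁻ ξ, H (Ψ (θ ξ ω)) * ENNReal.ofReal (F ω 0 ξ) ∂Ψ ω ∂P)
            * volume B) := by
          congr 1
          rw [← lintegral_mul_const' (volume B) _ hBtop.ne]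
          exact lintegral_congr fun ω => lintegral_mul_const' (volume B) _ hBtop.ne
      _ = (lam * volume B)
            * ∫⁻ ω, ∫⁻ ξ, H (Ψ (θ ξ ω)) * ENNReal.ofReal (F ω 0 ξ) ∂Ψ ω ∂P := by ring
  rw [key, ← mul_assoc,
    ENNReal.inv_mul_cancel (mul_ne_zero hlam0.ne' hB0.ne')
      (ENNReal.mul_ne_top hlamtop.ne hBtop.ne), one_mul]

/-- Shift-coupling: shifting `Ψ` by a random point with conditional law
`F(ω,0,·)Ψ(ω)` yields the Palm version of `Ψ`. -/
theorem stmt6 {Ω : Type*} [MeasurableSpace Ω] {d : ℕ} (hd : 0 < d)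
    (P : Measure Ω) [IsProbabilityMeasure P]
    (θ : Rd d → Ω → Ω) (hflow : IsMeasurableFlow θ) (hinv : IsFlowInvariant θ P)
    (herg : IsErgodicFlow θ P)
    (Ψ : Ω → Measure (Rd d)) (hΨ : IsRandomMeasure Ψ) (hΨa : FlowAdaptedMeasure θ Ψ)
    (lam : ℝ≥0∞) (hlam0 : 0 < lam) (hlamtop : lam < ⊤) (hΨi : HasIntensity P Ψ lam)
    (F : Ω → Rd d → Rd d → ℝ) (hF : FlowAdaptedKernel θ F)
    (hbal : ∀ᵐ ω ∂P, IsBalancing (lam • (volume : Measure (Rd d))) (Ψ ω) (F ω))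
    (H : Measure (Rd d) → ℝ≥0∞) (hH : Measurable H)
    (B : Set (Rd d)) (hB : MeasurableSet B) (hB0 : 0 < volume B) (hBtop : volume B < ⊤) :
    ∫⁻ ω, ∫⁻ ξ, H (shiftMeasure ξ (Ψ ω)) * ENNReal.ofReal (F ω 0 ξ) ∂(Ψ ω) ∂P
      = (lam * volume B)⁻¹ * ∫⁻ ω, ∫⁻ s in B, H (shiftMeasure s (Ψ ω)) ∂(Ψ ω) ∂P := by
  classical
  obtain ⟨mθ, hθ0, hθc⟩ := hflow
  obtain ⟨hΨm, hΨloc⟩ := hΨ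
  obtain ⟨mF, hFad⟩ := hF
  have hshift : ∀ (ξ : Rd d) (ω : Ω), shiftMeasure ξ (Ψ ω) = Ψ (θ ξ ω) := by
    intro ξ ω
    refine Measure.ext fun s hs => ?_
    rw [show shiftMeasure ξ (Ψ ω) = Measure.map (fun x => x - ξ) (Ψ ω) from rfl,
      Measure.map_apply (by fun_prop : Measurable fun x : Rd d => x - ξ) hs, hΨa ω ξ s hs]
    congr 1
    ext y
    simp only [Set.mem_image, Set.mem_preimage]
    constructor
    · intro hy
      exact ⟨y - ξ, hy, by abel⟩
    · rintro ⟨b, hb, rfl⟩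
      simpa using hb
  have hbal2 : ∀ᵐ ω ∂P, ∀ᵐ ξ ∂(Ψ ω),
      ∫⁻ x, ENNReal.ofReal (F ω x ξ) ∂(lam • (volume : Measure (Rd d))) = 1 :=
    hbal.mono fun ω h => h.2.2
  simp only [hshift]
  exact Stmt6Aux.stmt6_main P θ mθ hθc hinv Ψ hΨm hΨloc hΨa lam hlam0 hlamtop F mF hFad hbal2
    H hH B hB hB0 hBtop
end
end

section
/- Let f be a stable constrained density for (φ,ψ). Let X' := {x ∈ ℝ^d : ∫ f(x,ξ) ψ(dξ) < 1} be the set of f-unexhausted sites and Ξ' := {ξ ∈ ℝ^d : ∫ f(x,ξ) φ(dx) < 1} the set of f-unsated centers. If X' ≠ ∅, then ψ(Ξ') < 1; and if Ξ' ≠ ∅, then φ(X') < 1. In particular, φ(X') < 1 or ψ(Ξ') < 1. -/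
open MeasureTheory Filter Metric Bornology
open scoped ENNReal NNReal Topology

noncomputable section

attribute [local instance] Classical.propDecidable

lemma locFin_sigmaFinite' {d : ℕ} {μ : Measure (Rd d)} (h : LocFin μ) : SigmaFinite μ :=
  ⟨⟨⟨fun n => closedBall 0 n, fun _ => trivial,
    fun n => h _ isBounded_closedBall, iUnion_closedBall_nat 0⟩⟩⟩

/-- For a stable constrained density, if there is an unexhausted site then
the unsated centers have `ψ`-measure `< 1`, and if there is an unsated center then the
unexhausted sites have `φ`-measure `< 1`; in particular one of the two always holds. -/
theorem stmt8 {d : ℕ} (φ ψ : Measure (Rd d)) (hφ : LocFin φ) (hψ : LocFin ψ)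
    (f : Rd d → Rd d → ℝ) (hf : IsStableDensity φ ψ f) :
    (({x | Unexhausted ψ f x}).Nonempty → ψ {ξ | Unsated φ f ξ} < 1) ∧
    (({ξ | Unsated φ f ξ}).Nonempty → φ {x | Unexhausted ψ f x} < 1) ∧
    (φ {x | Unexhausted ψ f x} < 1 ∨ ψ {ξ | Unsated φ f ξ} < 1) := by
  obtain ⟨⟨⟨hmeas, hnn, hsub1, hsub2⟩, hle1⟩, hstab⟩ := hf
  have hσφ : SigmaFinite φ := locFin_sigmaFinite' hφ
  have hσψ : SigmaFinite ψ := locFin_sigmaFinite' hψ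
  have hgm : Measurable fun p : Rd d × Rd d => ENNReal.ofReal (f p.1 p.2) :=
    ENNReal.measurable_ofReal.comp hmeas
  have hΞmeas : MeasurableSet {ξ | Unsated φ f ξ} := by
    have h1 : Measurable fun ξ => ∫⁻ x, ENNReal.ofReal (f x ξ) ∂φ :=
      hgm.lintegral_prod_left'
    exact measurableSet_lt h1 measurable_const
  have hXmeas : MeasurableSet {x | Unexhausted ψ f x} := by
    have h1 : Measurable fun x => ∫⁻ ξ, ENNReal.ofReal (f x ξ) ∂ψ :=
      hgm.lintegral_prod_right'
    exact measurableSet_lt h1 measurable_const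
  have part1 : ({x | Unexhausted ψ f x}).Nonempty → ψ {ξ | Unsated φ f ξ} < 1 := by
    rintro ⟨x₀, hx₀⟩
    have key : ∀ ξ ∈ {ξ | Unsated φ f ξ}, f x₀ ξ = 1 := by
      intro ξ hξ
      by_contra h
      exact hstab ⟨x₀, ξ, ⟨lt_of_le_of_ne (hle1 _ _) h, Or.inl hx₀⟩,
        ⟨lt_of_le_of_ne (hle1 _ _) h, Or.inl hξ⟩⟩
    calc ψ {ξ | Unsated φ f ξ} = ∫⁻ _ in {ξ | Unsated φ f ξ}, 1 ∂ψ :=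
          (setLIntegral_one _).symm
      _ = ∫⁻ ξ in {ξ | Unsated φ f ξ}, ENNReal.ofReal (f x₀ ξ) ∂ψ := by
          refine setLIntegral_congr_fun hΞmeas (fun ξ hξ => ?_)
          rw [key ξ hξ, ENNReal.ofReal_one]
      _ ≤ ∫⁻ ξ, ENNReal.ofReal (f x₀ ξ) ∂ψ := setLIntegral_le_lintegral _ _
      _ < 1 := hx₀
  have part2 : ({ξ | Unsated φ f ξ}).Nonempty → φ {x | Unexhausted ψ f x} < 1 := by
    rintro ⟨ξ₀, hξ₀⟩
    have key : ∀ x ∈ {x | Unexhausted ψ f x}, f x ξ₀ = 1 := by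
      intro x hx
      by_contra h
      exact hstab ⟨x, ξ₀, ⟨lt_of_le_of_ne (hle1 _ _) h, Or.inl hx⟩,
        ⟨lt_of_le_of_ne (hle1 _ _) h, Or.inl hξ₀⟩⟩
    calc φ {x | Unexhausted ψ f x} = ∫⁻ _ in {x | Unexhausted ψ f x}, 1 ∂φ :=
          (setLIntegral_one _).symm
      _ = ∫⁻ x in {x | Unexhausted ψ f x}, ENNReal.ofReal (f x ξ₀) ∂φ := by
          refine setLIntegral_congr_fun hXmeas (fun x hx => ?_)
          rw [key x hx, ENNReal.ofReal_one]
      _ ≤ ∫⁻ x, ENNReal.ofReal (f x ξ₀) ∂φ := setLIntegral_le_lintegral _ _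
      _ < 1 := hξ₀
  refine ⟨part1, part2, ?_⟩
  by_cases hX : ({x | Unexhausted ψ f x}).Nonempty
  · exact Or.inr (part1 hX)
  · left
    rw [Set.not_nonempty_iff_eq_empty] at hX
    simp [hX]
end
end

section
/- Suppose every open half-space of ℝ^d has infinite ψ-measure. Then for every ξ ∈ ℝ^d, the Voronoi territory of ξ with respect to ψ is a bounded set. -/
open MeasureTheory Filter Metric Bornology
open scoped ENNReal NNReal Topology

noncomputable section

attribute [local instance] Classical.propDecidable

lemma territory_ball_le {d : ℕ} (ψ : Measure (Rd d)) {x ξ : Rd d}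
    (hx : x ∈ voronoiTerritory ψ ξ) {s : ℝ} (hs : 0 ≤ s) (hlt : s < dist x ξ) :
    ψ (closedBall x s) ≤ 1 := by
  by_contra h
  push_neg at h
  have hle : ENNReal.ofReal (dist x ξ) ≤ vRad ψ x := by
    by_contra hc
    push_neg at hc
    have hz : voronoiDensity ψ x ξ = 0 := by
      unfold voronoiDensity
      rw [if_neg (not_lt.mpr hc.le), if_neg hc.ne']
    have hx' : (0:ℝ) < voronoiDensity ψ x ξ := hx
    rw [hz] at hx'
    exact lt_irrefl 0 hx'
  have hsup : vRad ψ x ≤ ENNReal.ofReal s := by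
    apply sSup_le
    rintro _ ⟨a, ⟨ha0, ha1⟩, rfl⟩
    apply ENNReal.ofReal_le_ofReal
    by_contra hgt
    push_neg at hgt
    exact absurd (le_trans (measure_mono (closedBall_subset_closedBall hgt.le)) ha1)
      (not_le.mpr h)
  have h1 : ENNReal.ofReal (dist x ξ) ≤ ENNReal.ofReal s := hle.trans hsup
  have h2 : dist x ξ ≤ s := (ENNReal.ofReal_le_ofReal_iff hs).mp h1
  linarith

lemma exists_chunk {d : ℕ} (ψ : Measure (Rd d)) (v : Rd d) (b : ℝ)
    (hH : ψ {x : Rd d | b < (inner ℝ v x : ℝ)} = ⊤) (c : Rd d) :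
    ∃ M : ℝ, 0 ≤ M ∧ 1 < ψ ({x : Rd d | b < (inner ℝ v x : ℝ)} ∩ closedBall c M) := by
  set H := {x : Rd d | b < (inner ℝ v x : ℝ)} with hHdef
  have hmono : Monotone (fun n : ℕ => H ∩ closedBall c n) := by
    intro m n hmn
    exact Set.inter_subset_inter_right _ (closedBall_subset_closedBall (by exact_mod_cast hmn))
  have hU : (⋃ n : ℕ, H ∩ closedBall c n) = H := by
    apply Set.Subset.antisymm
    · exact Set.iUnion_subset fun n => Set.inter_subset_left
    · intro y hy
      obtain ⟨n, hn⟩ := exists_nat_ge (dist y c)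
      exact Set.mem_iUnion.mpr ⟨n, hy, mem_closedBall.mpr hn⟩
  have heq := hmono.measure_iUnion (μ := ψ)
  rw [hU, hH] at heq
  have hlt : (1 : ℝ≥0∞) < ⨆ n : ℕ, ψ (H ∩ closedBall c n) := by
    rw [← heq]; exact ENNReal.one_lt_top
  obtain ⟨n, hn⟩ := lt_iSup_iff.mp hlt
  exact ⟨n, n.cast_nonneg, hn⟩

set_option maxHeartbeats 1000000 in
/-- If every open half-space has infinite `ψ`-measure, then all Voronoi
territories with respect to `ψ` are bounded. -/
theorem stmt18 {d : ℕ} (ψ : Measure (Rd d)) (hψ : LocFin ψ) (hmass : 1 ≤ ψ Set.univ)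
    (hhalf : ∀ v : Rd d, ‖v‖ = 1 → ∀ b : ℝ, ψ {x : Rd d | b < (inner ℝ v x : ℝ)} = ⊤) :
    ∀ ξ : Rd d, IsBounded (voronoiTerritory ψ ξ) := by
  intro ξ
  by_contra hB
  rw [isBounded_iff_subset_closedBall ξ] at hB
  push_neg at hB
  have hseq : ∀ n : ℕ, ∃ y, y ∈ voronoiTerritory ψ ξ ∧ (n : ℝ) < dist y ξ := by
    intro n
    obtain ⟨y, hy, hny⟩ := Set.not_subset.mp (hB n)
    refine ⟨y, hy, ?_⟩
    simpa [mem_closedBall, not_le] using hny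
  choose x hxT hxd using hseq
  have hxne : ∀ n, x n - ξ ≠ 0 := by
    intro n h
    have : dist (x n) ξ = 0 := by
      rw [dist_eq_norm, h, norm_zero]
    have := hxd n
    have hn : (0:ℝ) ≤ n := n.cast_nonneg
    linarith
  set u : ℕ → Rd d := fun n => ‖x n - ξ‖⁻¹ • (x n - ξ) with hu
  have hun : ∀ n, ‖u n‖ = 1 := fun n => norm_smul_inv_norm (hxne n)
  have husphere : ∀ n, u n ∈ sphere (0 : Rd d) 1 := by
    intro n; rw [mem_sphere_zero_iff_norm]; exact hun n
  obtain ⟨a, hamem, φ, hφmono, hφtend⟩ :=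
    (isCompact_sphere (0 : Rd d) 1).tendsto_subseq husphere
  have ha : ‖a‖ = 1 := mem_sphere_zero_iff_norm.mp hamem
  -- half-space in direction a, offset past ξ by 1
  obtain ⟨M, hM0, hMmass⟩ := exists_chunk ψ a ((inner ℝ a ξ : ℝ) + 1)
    (hhalf a ha ((inner ℝ a ξ : ℝ) + 1)) ξ
  -- choose n large
  have hε : (0:ℝ) < (2 * (M + 1))⁻¹ := by positivity
  obtain ⟨N, hN⟩ := (Metric.tendsto_atTop.mp hφtend) _ hε
  set n := max N (⌈2 * M ^ 2 + 1⌉₊) with hn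
  set m := φ n with hm
  set r := dist (x m) ξ with hr
  have hmn : (n : ℝ) ≤ m := by exact_mod_cast hφmono.le_apply
  have hrn : (n : ℝ) < r := lt_of_le_of_lt (by exact_mod_cast hφmono.le_apply) (hxd m)
  have hrbig : 2 * M ^ 2 + 1 ≤ r := by
    have h1 : (⌈2 * M ^ 2 + 1⌉₊ : ℝ) ≤ n := by
      exact_mod_cast Nat.le_max_right N _
    have h2 : 2 * M ^ 2 + 1 ≤ (⌈2 * M ^ 2 + 1⌉₊ : ℝ) := Nat.le_ceil _
    linarith
  have hdir : dist (u m) a < (2 * (M + 1))⁻¹ := hN n (le_max_left _ _)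
  -- the geometric containment
  have hsub : {y : Rd d | (inner ℝ a ξ : ℝ) + 1 < (inner ℝ a y : ℝ)} ∩ closedBall ξ M ⊆
      closedBall (x m) (r - 1/4) := by
    rintro y ⟨hyH, hyB⟩
    rw [mem_closedBall, dist_eq_norm]
    set w := y - ξ with hw
    set z := x m - ξ with hz
    have hinner_aw : (1:ℝ) < inner ℝ a w := by
      have : (inner ℝ a w : ℝ) = inner ℝ a y - inner ℝ a ξ := inner_sub_right a y ξ
      rw [this]
      have := Set.mem_setOf_eq ▸ hyH
      linarith
    have hwnorm : ‖w‖ ≤ M := by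
      rw [hw, ← dist_eq_norm]; exact mem_closedBall.mp hyB
    have hrpos : (0:ℝ) < r := by nlinarith [sq_nonneg M]
    have hzu : z = r • u m := by
      rw [hu]
      simp only
      rw [smul_smul, hr, dist_eq_norm, ← hz]
      rw [mul_inv_cancel₀ (norm_ne_zero_iff.mpr (hxne m)), one_smul]
    -- inner ℝ (u m) w ≥ 1/2
    have hcs : |(inner ℝ (u m - a) w : ℝ)| ≤ ‖u m - a‖ * ‖w‖ := abs_real_inner_le_norm _ _
    have hdiff : ‖u m - a‖ ≤ (2 * (M + 1))⁻¹ := by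
      rw [← dist_eq_norm]; exact hdir.le
    have hprod : ‖u m - a‖ * ‖w‖ ≤ 1/2 := by
      have h1 : ‖u m - a‖ * ‖w‖ ≤ (2 * (M + 1))⁻¹ * M :=
        mul_le_mul hdiff hwnorm (norm_nonneg _) (le_of_lt hε)
      have h2 : (2 * (M + 1))⁻¹ * M ≤ 1/2 := by
        rw [inv_mul_le_iff₀ (by positivity)]
        nlinarith
      linarith
    have hinner_uw : (1:ℝ)/2 ≤ inner ℝ (u m) w := by
      have hsplit : (inner ℝ (u m) w : ℝ) = inner ℝ a w + inner ℝ (u m - a) w := by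
        rw [inner_sub_left]; ring
      have habs := abs_le.mp hcs
      linarith [habs.1]
    have hinner_zw : r / 2 ≤ (inner ℝ z w : ℝ) := by
      rw [hzu, real_inner_smul_left]
      have := mul_le_mul_of_nonneg_left hinner_uw hrpos.le
      linarith
    have hexp : ‖z - w‖ ^ 2 = ‖z‖ ^ 2 - 2 * (inner ℝ z w : ℝ) + ‖w‖ ^ 2 :=
      norm_sub_sq_real z w
    have hznorm : ‖z‖ = r := by rw [hz, hr, dist_eq_norm]
    have hsq : ‖z - w‖ ^ 2 ≤ (r - 1/4) ^ 2 := by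
      rw [hexp, hznorm]
      have hw2 : ‖w‖ ^ 2 ≤ M ^ 2 := by nlinarith [norm_nonneg w]
      nlinarith [hw2, hinner_zw, hrbig]
    have hgoal : ‖z - w‖ ≤ r - 1/4 := by
      have h14 : (0:ℝ) ≤ r - 1/4 := by nlinarith [sq_nonneg M]
      calc ‖z - w‖ = Real.sqrt (‖z - w‖ ^ 2) := (Real.sqrt_sq (norm_nonneg _)).symm
        _ ≤ Real.sqrt ((r - 1/4) ^ 2) := Real.sqrt_le_sqrt hsq
        _ = r - 1/4 := Real.sqrt_sq h14
    have heq2 : y - x m = -(z - w) := by rw [hz, hw]; abel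
    rw [heq2, norm_neg]; exact hgoal
  -- contradiction
  have h1 : ψ ({y : Rd d | (inner ℝ a ξ : ℝ) + 1 < (inner ℝ a y : ℝ)} ∩ closedBall ξ M) ≤
      ψ (closedBall (x m) (r - 1/4)) := measure_mono hsub
  have h2 : ψ (closedBall (x m) (r - 1/4)) ≤ 1 := by
    apply territory_ball_le ψ (hxT m)
    · nlinarith [sq_nonneg M]
    · rw [← hr]; linarith
  exact absurd (hMmass.trans_le (h1.trans h2)) (lt_irrefl 1)
end
end
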